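/- arXiv:1901.08171 — 3 statements merged into one kernel-verified Lean document; each statement's English description precedes it below -/
import Mathlib

section
/- If H is a minor of G and the maximum degree of H is at most 3, then G contains a subdivision of H as a subgraph; that is, H is a topological minor of G. -/
open SimpleGraph

/-- `IsMinor H G` : `H` is a minor of `G`, via the branch-set definition: pairwise disjoint
nonempty connected subsets of `V(G)`, one per vertex of `H`, with an edge of `G` between the
sets corresponding to every edge of `H`. -/
def IsMinor {W V : Type} (H : SimpleGraph W) (G : SimpleGraph V) : Prop :=
  ∃ f : W → Set V,
    (∀ i, (f i).Nonempty) ∧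
    (Pairwise fun i j => Disjoint (f i) (f j)) ∧
    (∀ i, (G.induce (f i)).Connected) ∧
    (∀ i j, H.Adj i j → ∃ u ∈ f i, ∃ v ∈ f j, G.Adj u v)

/-- The graph obtained from `H` by subdividing the edge `xy`: the edge `xy` is deleted and the
new vertex `none` is adjacent exactly to `x` and `y`. -/
def SubdivideEdge {V : Type} (H : SimpleGraph V) (x y : V) : SimpleGraph (Option V) :=
  SimpleGraph.fromRel fun a b =>
    (∃ u v : V, a = some u ∧ b = some v ∧ H.Adj u v ∧ s(u, v) ≠ s(x, y)) ∨
    (a = none ∧ (b = some x ∨ b = some y))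

/-- `IsSubdivision G H` : `G` can be obtained from `H` by a finite sequence of edge
subdivisions (up to isomorphism). -/
inductive IsSubdivision : ∀ {V : Type}, SimpleGraph V → ∀ {W : Type}, SimpleGraph W → Prop
  | of_iso {V W : Type} {G : SimpleGraph V} {H : SimpleGraph W} (e : G ≃g H) :
      IsSubdivision G H
  | step {V W : Type} {G : SimpleGraph V} {H : SimpleGraph W} (x y : W) (hxy : H.Adj x y)
      (h : IsSubdivision G (SubdivideEdge H x y)) : IsSubdivision G H

/-- `H` is (isomorphic to) a subgraph of `G`. -/
def IsSubgraphCopy {W V : Type} (H : SimpleGraph W) (G : SimpleGraph V) : Prop :=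
  ∃ f : H →g G, Function.Injective f

/-- `H` is a topological minor of `G`: some subgraph of `G` is a subdivision of `H`. -/
def IsTopologicalMinor {W V : Type} (H : SimpleGraph W) (G : SimpleGraph V) : Prop :=
  ∃ (U : Type) (K : SimpleGraph U), IsSubdivision K H ∧ IsSubgraphCopy K G

/-- The maximum vertex degree `Δ(G)` of a finite graph. -/
noncomputable def maxDeg {V : Type} [Fintype V] (G : SimpleGraph V) : ℕ :=
  Finset.univ.sup fun v => (G.neighborSet v).ncard

/-- `edgeCount G A B` : the number of edges of `G` with one endpoint in `A`
and the other in `B`. -/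
noncomputable def edgeCount {V : Type} (G : SimpleGraph V) (A B : Set V) : ℕ :=
  {e ∈ G.edgeSet | ∃ u ∈ A, ∃ v ∈ B, e = s(u, v)}.ncard

/-- The Petersen graph: `(false, i)` is the outer vertex `uᵢ`, `(true, i)` is the inner
vertex `vᵢ`; edges are `uᵢuᵢ₊₁`, `uᵢvᵢ`, `vᵢvᵢ₊₂` with indices mod 5. -/
def Petersen : SimpleGraph (Bool × ZMod 5) :=
  SimpleGraph.fromRel fun a b =>
    (a.1 = false ∧ b.1 = false ∧ b.2 = a.2 + 1) ∨
    (a.1 = false ∧ b.1 = true ∧ a.2 = b.2) ∨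
    (a.1 = true ∧ b.1 = true ∧ b.2 = a.2 + 2)

/-- `G` is `k`-connected: more than `k` vertices, and deleting any set of fewer than `k`
vertices leaves a connected graph. -/
def KConnected {V : Type} [Fintype V] (k : ℕ) (G : SimpleGraph V) : Prop :=
  k < Fintype.card V ∧ ∀ S : Set V, S.ncard < k → (G.induce Sᶜ).Connected

namespace TMA

open SimpleGraph Walk Function

attribute [local instance] Classical.propDecidable

variable {V W : Type}

/-- The data of an `H`-subdivision inside `G`. -/
structure SubData {W V : Type} (H : SimpleGraph W) (G : SimpleGraph V) where
  b : W → V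
  binj : Function.Injective b
  P : ∀ i j, H.Adj i j → G.Walk (b i) (b j)
  path : ∀ i j h, (P i j h).IsPath
  disj : ∀ i j k l (h1 : H.Adj i j) (h2 : H.Adj k l), s(i,j) ≠ s(k,l) →
    ∀ v, v ∈ (P i j h1).support → v ∈ (P k l h2).support →
      (v = b i ∨ v = b j) ∧ (v = b k ∨ v = b l)
  bmem : ∀ i j (h : H.Adj i j) m, b m ∈ (P i j h).support → m = i ∨ m = j

noncomputable def measure {H : SimpleGraph W} {G : SimpleGraph V} [Fintype W]
    (d : SubData H G) (r : W → ℕ) : ℕ :=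
  ∑ p : W × W, if h : H.Adj p.1 p.2 ∧ r p.1 < r p.2 then (d.P p.1 p.2 h.1).length - 1 else 0

lemma length_pos {H : SimpleGraph W} {G : SimpleGraph V} (d : SubData H G)
    {i j : W} (h : H.Adj i j) : 1 ≤ (d.P i j h).length := by
  rcases Nat.eq_zero_or_pos (d.P i j h).length with h0 | h1
  · exact absurd (d.binj (Walk.eq_of_length_eq_zero h0)) h.ne
  · exact h1

/-- Base case: all paths have length one, so `H` itself embeds. -/
lemma base_case {H : SimpleGraph W} {G : SimpleGraph V} (d : SubData H G) (r : W → ℕ)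
    (hr : Function.Injective r)
    (hb : ∀ i j (h : H.Adj i j), r i < r j → (d.P i j h).length = 1) :
    IsTopologicalMinor H G := by
  refine ⟨W, H, IsSubdivision.of_iso (Iso.refl : H ≃g H), ⟨d.b, fun {i j} h => ?_⟩, d.binj⟩
  rcases lt_trichotomy (r i) (r j) with hij | hij | hij
  · exact Walk.adj_of_length_eq_one (hb i j h hij)
  · exact absurd (hr hij) h.ne
  · exact (Walk.adj_of_length_eq_one (hb j i h.symm hij)).symm

section AdjChar

variable {H : SimpleGraph W} {x y : W}

lemma subdivide_adj_some {u v : W} :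
    (SubdivideEdge H x y).Adj (some u) (some v) ↔ H.Adj u v ∧ s(u,v) ≠ s(x,y) := by
  constructor
  · rintro ⟨hne, h | h⟩
    · rcases h with ⟨u', v', h1, h2, h3, h4⟩ | ⟨h1, _⟩
      · cases h1; cases h2; exact ⟨h3, h4⟩
      · simp at h1
    · rcases h with ⟨u', v', h1, h2, h3, h4⟩ | ⟨h1, _⟩
      · cases h1; cases h2
        exact ⟨h3.symm, by rwa [Sym2.eq_swap] at h4⟩
      · simp at h1
  · rintro ⟨h1, h2⟩
    exact ⟨by simpa using h1.ne, Or.inl (Or.inl ⟨u, v, rfl, rfl, h1, h2⟩)⟩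

lemma subdivide_adj_none_some {z : W} :
    (SubdivideEdge H x y).Adj none (some z) ↔ z = x ∨ z = y := by
  constructor
  · rintro ⟨hne, h | h⟩
    · rcases h with ⟨u', v', h1, _⟩ | ⟨_, h2 | h2⟩
      · simp at h1
      · exact Or.inl (by simpa using h2)
      · exact Or.inr (by simpa using h2)
    · rcases h with ⟨u', v', _, h2, _⟩ | ⟨h1, _⟩
      · simp at h2
      · simp at h1
  · rintro (rfl | rfl)
    · exact ⟨by simp, Or.inl (Or.inr ⟨rfl, Or.inl rfl⟩)⟩
    · exact ⟨by simp, Or.inl (Or.inr ⟨rfl, Or.inr rfl⟩)⟩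

lemma subdivide_adj_some_none {z : W} :
    (SubdivideEdge H x y).Adj (some z) none ↔ z = x ∨ z = y := by
  rw [adj_comm]; exact subdivide_adj_none_some

lemma subdivide_not_adj_none : ¬ (SubdivideEdge H x y).Adj none none := fun h => h.ne rfl

end AdjChar

end TMA

namespace TMA

open SimpleGraph Walk Function

attribute [local instance] Classical.propDecidable

section Step

variable {V W : Type} {G : SimpleGraph V} {H : SimpleGraph W}

def stepB (d : SubData H G) (w0 : V) : Option W → V := fun o => o.elim w0 d.b

@[simp] lemma stepB_none (d : SubData H G) (w0 : V) : stepB d w0 none = w0 := rfl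

@[simp] lemma stepB_some (d : SubData H G) (w0 : V) (m : W) :
    stepB d w0 (some m) = d.b m := rfl

variable (d : SubData H G) {x y : W} {w0 : V}

noncomputable def stepP (e : G.Adj (d.b x) w0) (q : G.Walk w0 (d.b y)) :
    ∀ i j, (SubdivideEdge H x y).Adj i j → G.Walk (stepB d w0 i) (stepB d w0 j)
  | some u, some v, hij => d.P u v (subdivide_adj_some.mp hij).1
  | none, some z, hij =>
      if hz : z = x then (Walk.cons e.symm Walk.nil).copy rfl (congrArg d.b hz.symm)
      else q.copy rfl (congrArg d.b (((subdivide_adj_none_some.mp hij).resolve_left hz).symm))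
  | some z, none, hij =>
      if hz : z = x then (Walk.cons e Walk.nil).copy (congrArg d.b hz.symm) rfl
      else q.reverse.copy (congrArg d.b (((subdivide_adj_some_none.mp hij).resolve_left hz).symm)) rfl
  | none, none, hij => absurd hij subdivide_not_adj_none

variable (hxy : H.Adj x y) (e : G.Adj (d.b x) w0) (q : G.Walk w0 (d.b y))

lemma support_stepP_none_x (hij : (SubdivideEdge H x y).Adj none (some x)) :
    (stepP d e q none (some x) hij).support = [w0, d.b x] := by
  simp only [stepP, dif_pos]
  simp

lemma support_stepP_none_y (hij : (SubdivideEdge H x y).Adj none (some y))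
    (hne : y ≠ x) : (stepP d e q none (some y) hij).support = q.support := by
  simp only [stepP]
  rw [dif_neg hne]
  simp

lemma support_stepP_some_none_x (hij : (SubdivideEdge H x y).Adj (some x) none) :
    (stepP d e q (some x) none hij).support = [d.b x, w0] := by
  simp only [stepP, dif_pos]
  simp

lemma support_stepP_some_none_y (hij : (SubdivideEdge H x y).Adj (some y) none)
    (hne : y ≠ x) : (stepP d e q (some y) none hij).support = q.reverse.support := by
  simp only [stepP]
  rw [dif_neg hne]
  simp

lemma length_stepP_none_x (hij : (SubdivideEdge H x y).Adj none (some x)) :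
    (stepP d e q none (some x) hij).length = 1 := by
  simp only [stepP, dif_pos]
  simp

lemma length_stepP_none_y (hij : (SubdivideEdge H x y).Adj none (some y))
    (hne : y ≠ x) : (stepP d e q none (some y) hij).length = q.length := by
  simp only [stepP]
  rw [dif_neg hne]
  simp

section Facts

variable (hp : d.P x y hxy = Walk.cons e q)

include hp

lemma q_isPath : q.IsPath := by
  have := d.path x y hxy
  rw [hp, Walk.cons_isPath_iff] at this
  exact this.1

lemma bx_not_mem_q : d.b x ∉ q.support := by
  have := d.path x y hxy
  rw [hp, Walk.cons_isPath_iff] at this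
  exact this.2

lemma w0_mem_p : w0 ∈ (d.P x y hxy).support := by
  rw [hp, Walk.support_cons]
  exact List.mem_cons_of_mem _ q.start_mem_support

lemma q_support_subset : ∀ t ∈ q.support, t ∈ (d.P x y hxy).support := by
  intro t ht
  rw [hp, Walk.support_cons]
  exact List.mem_cons_of_mem _ ht

lemma w0_ne_bx : w0 ≠ d.b x := by
  intro h
  exact bx_not_mem_q d hxy e q hp (h ▸ q.start_mem_support)

include hxy

lemma w0_ne_by (hlen : 2 ≤ (d.P x y hxy).length) : w0 ≠ d.b y := by
  have hq1 : 1 ≤ q.length := by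
    have : (d.P x y hxy).length = q.length + 1 := by rw [hp]; simp
    omega
  intro h
  have hqp := q_isPath d hxy e q hp
  -- a path of positive length has distinct endpoints
  cases q with
  | nil => simp at hq1
  | cons e2 q2 =>
    rw [Walk.cons_isPath_iff] at hqp
    exact hqp.2 (h ▸ q2.end_mem_support)

variable (hlen : 2 ≤ (d.P x y hxy).length)
include hlen

lemma bm_ne_w0 : ∀ m, d.b m ≠ w0 := by
  intro m h
  have hmem : d.b m ∈ (d.P x y hxy).support := h ▸ w0_mem_p d hxy e q hp
  rcases d.bmem x y hxy m hmem with rfl | rfl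
  · exact w0_ne_bx d hxy e q hp h.symm
  · exact w0_ne_by d hxy e q hp hlen h.symm

lemma w0_not_mem_old {u v : W} (h : H.Adj u v) (hs : s(u,v) ≠ s(x,y)) :
    w0 ∉ (d.P u v h).support := by
  intro hmem
  have := d.disj x y u v hxy h (Ne.symm hs) w0 (w0_mem_p d hxy e q hp) hmem
  rcases this.1 with h1 | h1
  · exact w0_ne_bx d hxy e q hp h1
  · exact w0_ne_by d hxy e q hp hlen h1

lemma stepB_injective : Function.Injective (stepB d w0) := by
  intro o1 o2 h
  match o1, o2 with
  | none, none => rfl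
  | none, some m => exact absurd h.symm (bm_ne_w0 d hxy e q hp hlen m)
  | some m, none => exact absurd h (bm_ne_w0 d hxy e q hp hlen m)
  | some m1, some m2 => exact congrArg some (d.binj h)

lemma mem_stepP (i j : Option W) (hij : (SubdivideEdge H x y).Adj i j) (t : V) :
    t ∈ (stepP d e q i j hij).support ↔
      (∃ u, ∃ v, ∃ h : H.Adj u v, s(u,v) ≠ s(x,y) ∧ i = some u ∧ j = some v ∧
        t ∈ (d.P u v h).support) ∨
      (s(i,j) = s((none : Option W), some x) ∧ (t = w0 ∨ t = d.b x)) ∨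
      (s(i,j) = s((none : Option W), some y) ∧ t ∈ q.support) := by
  have hxny : x ≠ y := hxy.ne
  match i, j with
  | some u, some v =>
    obtain ⟨h, hs⟩ := subdivide_adj_some.mp hij
    constructor
    · intro ht
      exact Or.inl ⟨u, v, h, hs, rfl, rfl, ht⟩
    · rintro (⟨u', v', h', hs', hu', hv', ht⟩ | ⟨hs2, _⟩ | ⟨hs2, _⟩)
      · cases hu'; cases hv'; exact ht
      · rw [Sym2.eq_iff] at hs2; simp at hs2
      · rw [Sym2.eq_iff] at hs2; simp at hs2
  | none, some z =>
    rcases subdivide_adj_none_some.mp hij with rfl | rfl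
    · rw [support_stepP_none_x d e q hij]
      constructor
      · intro ht
        simp only [List.mem_cons, List.mem_singleton, List.not_mem_nil, or_false] at ht
        exact Or.inr (Or.inl ⟨rfl, ht⟩)
      · rintro (⟨u', v', h', hs', hu', hv', ht⟩ | ⟨_, ht⟩ | ⟨hs2, ht⟩)
        · simp at hu'
        · simp [ht]
        · rw [Sym2.eq_iff] at hs2
          simp only [Option.some.injEq] at hs2
          rcases hs2 with ⟨_, h2⟩ | ⟨h2, _⟩ <;> simp_all
    · rw [support_stepP_none_y d e q hij hxny.symm]
      constructor
      · intro ht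
        exact Or.inr (Or.inr ⟨rfl, ht⟩)
      · rintro (⟨u', v', h', hs', hu', hv', ht⟩ | ⟨hs2, ht⟩ | ⟨_, ht⟩)
        · simp at hu'
        · rw [Sym2.eq_iff] at hs2
          simp only [Option.some.injEq] at hs2
          rcases hs2 with ⟨_, h2⟩ | ⟨h2, _⟩ <;> simp_all
        · exact ht
  | some z, none =>
    rcases subdivide_adj_some_none.mp hij with rfl | rfl
    · rw [support_stepP_some_none_x d e q hij]
      constructor
      · intro ht
        simp only [List.mem_cons, List.mem_singleton, List.not_mem_nil, or_false] at ht
        rcases ht with ht | ht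
        · exact Or.inr (Or.inl ⟨by rw [Sym2.eq_swap], Or.inr ht⟩)
        · exact Or.inr (Or.inl ⟨by rw [Sym2.eq_swap], Or.inl ht⟩)
      · rintro (⟨u', v', h', hs', hu', hv', ht⟩ | ⟨_, ht⟩ | ⟨hs2, ht⟩)
        · simp at hv'
        · rcases ht with rfl | rfl <;> simp
        · rw [Sym2.eq_iff] at hs2
          simp only [Option.some.injEq] at hs2
          rcases hs2 with ⟨h2, _⟩ | ⟨_, h2⟩ <;> simp_all
    · rw [support_stepP_some_none_y d e q hij hxny.symm]
      rw [Walk.support_reverse, List.mem_reverse]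
      constructor
      · intro ht
        exact Or.inr (Or.inr ⟨by rw [Sym2.eq_swap], ht⟩)
      · rintro (⟨u', v', h', hs', hu', hv', ht⟩ | ⟨hs2, ht⟩ | ⟨_, ht⟩)
        · simp at hv'
        · rw [Sym2.eq_iff] at hs2
          simp only [Option.some.injEq] at hs2
          rcases hs2 with ⟨h2, _⟩ | ⟨_, h2⟩ <;> simp_all
        · exact ht
  | none, none => exact absurd hij subdivide_not_adj_none

end Facts

end Step

end TMA

namespace TMA

open SimpleGraph Walk Function

attribute [local instance] Classical.propDecidable

section Step2

variable {V W : Type} {G : SimpleGraph V} {H : SimpleGraph W}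
variable (d : SubData H G) {x y : W} {w0 : V}
variable (hxy : H.Adj x y) (e : G.Adj (d.b x) w0) (q : G.Walk w0 (d.b y))
variable (hp : d.P x y hxy = Walk.cons e q) (hlen : 2 ≤ (d.P x y hxy).length)

include hxy hp in
lemma stepP_isPath : ∀ i j (hij : (SubdivideEdge H x y).Adj i j),
    (stepP d e q i j hij).IsPath := by
  intro i j hij
  match i, j with
  | some u, some v => exact d.path u v _
  | none, some z =>
    rcases subdivide_adj_none_some.mp hij with rfl | rfl
    · rw [Walk.isPath_def, support_stepP_none_x d e q hij]
      simp [w0_ne_bx d hxy e q hp]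
    · rw [Walk.isPath_def, support_stepP_none_y d e q hij (Ne.symm hxy.ne)]
      exact (q_isPath d hxy e q hp).support_nodup
  | some z, none =>
    rcases subdivide_adj_some_none.mp hij with rfl | rfl
    · rw [Walk.isPath_def, support_stepP_some_none_x d e q hij]
      simp [Ne.symm (w0_ne_bx d hxy e q hp)]
    · rw [Walk.isPath_def, support_stepP_some_none_y d e q hij (Ne.symm hxy.ne)]
      exact (q_isPath d hxy e q hp).reverse.support_nodup
  | none, none => exact absurd hij subdivide_not_adj_none

include hxy hp hlen in
lemma stepP_disj : ∀ i j k l (h1 : (SubdivideEdge H x y).Adj i j)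
    (h2 : (SubdivideEdge H x y).Adj k l), s(i,j) ≠ s(k,l) →
    ∀ t, t ∈ (stepP d e q i j h1).support → t ∈ (stepP d e q k l h2).support →
      (t = stepB d w0 i ∨ t = stepB d w0 j) ∧ (t = stepB d w0 k ∨ t = stepB d w0 l) := by
  intro i j k l h1 h2 hne t ht1 ht2
  rw [mem_stepP d hxy e q hp hlen] at ht1 ht2
  have hbxq := bx_not_mem_q d hxy e q hp
  rcases ht1 with ⟨u, v, h, hs, rfl, rfl, ht⟩ | ⟨hsij, ht⟩ | ⟨hsij, ht⟩
  · rcases ht2 with ⟨u', v', h', hs', rfl, rfl, ht'⟩ | ⟨hskl, ht'⟩ | ⟨hskl, ht'⟩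
    · -- old-old
      have hsne : s(u,v) ≠ s(u',v') := by
        intro hh
        apply hne
        rw [Sym2.eq_iff] at hh
        rcases hh with ⟨rfl, rfl⟩ | ⟨rfl, rfl⟩
        · rfl
        · exact Sym2.eq_swap
      obtain ⟨c1, c2⟩ := d.disj u v u' v' h h' hsne t ht ht'
      simp only [stepB_some]
      exact ⟨c1, c2⟩
    · -- old - new x
      rcases ht' with rfl | rfl
      · exact absurd ht (w0_not_mem_old d hxy e q hp hlen h hs)
      · constructor
        · simp only [stepB_some]
          rcases d.bmem u v h x ht with rfl | rfl
          · exact Or.inl rfl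
          · exact Or.inr rfl
        · rw [Sym2.eq_iff] at hskl
          rcases hskl with ⟨rfl, rfl⟩ | ⟨rfl, rfl⟩
          · exact Or.inr (by simp)
          · exact Or.inl (by simp)
    · -- old - new y
      have htp := q_support_subset d hxy e q hp t ht'
      have hd := d.disj x y u v hxy h (Ne.symm hs) t htp ht
      have hty : t = d.b y := by
        rcases hd.1 with h1 | h1
        · exact absurd (h1 ▸ ht') hbxq
        · exact h1
      constructor
      · simp only [stepB_some]
        rcases d.bmem u v h y (hty ▸ ht) with rfl | rfl
        · exact Or.inl hty
        · exact Or.inr hty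
      · rw [Sym2.eq_iff] at hskl
        rcases hskl with ⟨rfl, rfl⟩ | ⟨rfl, rfl⟩
        · exact Or.inr (by simpa using hty)
        · exact Or.inl (by simpa using hty)
  · rcases ht2 with ⟨u', v', h', hs', rfl, rfl, ht'⟩ | ⟨hskl, ht'⟩ | ⟨hskl, ht'⟩
    · -- new x - old
      rcases ht with rfl | rfl
      · exact absurd ht' (w0_not_mem_old d hxy e q hp hlen h' hs')
      · constructor
        · rw [Sym2.eq_iff] at hsij
          rcases hsij with ⟨rfl, rfl⟩ | ⟨rfl, rfl⟩
          · exact Or.inr (by simp)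
          · exact Or.inl (by simp)
        · simp only [stepB_some]
          rcases d.bmem u' v' h' x ht' with rfl | rfl
          · exact Or.inl rfl
          · exact Or.inr rfl
    · exact absurd (hsij.trans hskl.symm) hne
    · -- new x - new y
      rcases ht with rfl | rfl
      · constructor
        · rw [Sym2.eq_iff] at hsij
          rcases hsij with ⟨rfl, rfl⟩ | ⟨rfl, rfl⟩
          · exact Or.inl (by simp)
          · exact Or.inr (by simp)
        · rw [Sym2.eq_iff] at hskl
          rcases hskl with ⟨rfl, rfl⟩ | ⟨rfl, rfl⟩
          · exact Or.inl (by simp)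
          · exact Or.inr (by simp)
      · exact absurd ht' hbxq
  · rcases ht2 with ⟨u', v', h', hs', rfl, rfl, ht'⟩ | ⟨hskl, ht'⟩ | ⟨hskl, ht'⟩
    · -- new y - old
      have htp := q_support_subset d hxy e q hp t ht
      have hd := d.disj x y u' v' hxy h' (Ne.symm hs') t htp ht'
      have hty : t = d.b y := by
        rcases hd.1 with h1 | h1
        · exact absurd (h1 ▸ ht) hbxq
        · exact h1
      constructor
      · rw [Sym2.eq_iff] at hsij
        rcases hsij with ⟨rfl, rfl⟩ | ⟨rfl, rfl⟩
        · exact Or.inr (by simpa using hty)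
        · exact Or.inl (by simpa using hty)
      · simp only [stepB_some]
        rcases d.bmem u' v' h' y (hty ▸ ht') with rfl | rfl
        · exact Or.inl hty
        · exact Or.inr hty
    · -- new y - new x
      rcases ht' with rfl | rfl
      · constructor
        · rw [Sym2.eq_iff] at hsij
          rcases hsij with ⟨rfl, rfl⟩ | ⟨rfl, rfl⟩
          · exact Or.inl (by simp)
          · exact Or.inr (by simp)
        · rw [Sym2.eq_iff] at hskl
          rcases hskl with ⟨rfl, rfl⟩ | ⟨rfl, rfl⟩
          · exact Or.inl (by simp)
          · exact Or.inr (by simp)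
      · exact absurd ht hbxq
    · exact absurd (hsij.trans hskl.symm) hne

include hxy hp hlen in
lemma stepP_bmem : ∀ i j (hij : (SubdivideEdge H x y).Adj i j) m,
    stepB d w0 m ∈ (stepP d e q i j hij).support → m = i ∨ m = j := by
  intro i j hij m hm
  rw [mem_stepP d hxy e q hp hlen] at hm
  have hbxq := bx_not_mem_q d hxy e q hp
  rcases hm with ⟨u, v, h, hs, rfl, rfl, ht⟩ | ⟨hsij, ht⟩ | ⟨hsij, ht⟩
  · match m with
    | none => exact absurd ht (w0_not_mem_old d hxy e q hp hlen h hs)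
    | some m0 =>
      rcases d.bmem u v h m0 ht with rfl | rfl
      · exact Or.inl rfl
      · exact Or.inr rfl
  · match m with
    | none =>
      rw [Sym2.eq_iff] at hsij
      rcases hsij with ⟨rfl, rfl⟩ | ⟨rfl, rfl⟩
      · exact Or.inl rfl
      · exact Or.inr rfl
    | some m0 =>
      rcases ht with ht | ht
      · exact absurd ht (bm_ne_w0 d hxy e q hp hlen m0)
      · have : m0 = x := d.binj ht
        subst this
        rw [Sym2.eq_iff] at hsij
        rcases hsij with ⟨rfl, rfl⟩ | ⟨rfl, rfl⟩
        · exact Or.inr rfl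
        · exact Or.inl rfl
  · match m with
    | none =>
      rw [Sym2.eq_iff] at hsij
      rcases hsij with ⟨rfl, rfl⟩ | ⟨rfl, rfl⟩
      · exact Or.inl rfl
      · exact Or.inr rfl
    | some m0 =>
      have htp := q_support_subset d hxy e q hp _ ht
      rcases d.bmem x y hxy m0 htp with rfl | rfl
      · exact absurd ht hbxq
      · rw [Sym2.eq_iff] at hsij
        rcases hsij with ⟨rfl, rfl⟩ | ⟨rfl, rfl⟩
        · exact Or.inr rfl
        · exact Or.inl rfl

noncomputable def stepData : SubData (SubdivideEdge H x y) G where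
  b := stepB d w0
  binj := stepB_injective d hxy e q hp hlen
  P := stepP d e q
  path := stepP_isPath d hxy e q hp
  disj := stepP_disj d hxy e q hp hlen
  bmem := stepP_bmem d hxy e q hp hlen

end Step2

end TMA

namespace TMA

open SimpleGraph Walk Function

attribute [local instance] Classical.propDecidable

section Measure

variable {V W : Type} {G : SimpleGraph V} {H : SimpleGraph W} [Fintype W]
variable (d : SubData H G) {x y : W} {w0 : V}
variable (hxy : H.Adj x y) (e : G.Adj (d.b x) w0) (q : G.Walk w0 (d.b y))
variable (hp : d.P x y hxy = Walk.cons e q) (hlen : 2 ≤ (d.P x y hxy).length)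

include hxy hp hlen in
lemma measure_step (r : W → ℕ) (hrxy : r x < r y) :
    measure (stepData d hxy e q hp hlen) (fun o : Option W => o.elim 0 fun w => r w + 1) + 1
      ≤ measure d r := by
  set r' : Option W → ℕ := fun o => o.elim 0 fun w => r w + 1 with hr'def
  have hq1 : 1 ≤ q.length := by
    have : (d.P x y hxy).length = q.length + 1 := by rw [hp]; simp
    omega
  have hnewadj : ¬ (SubdivideEdge H x y).Adj (some x) (some y) := by
    rw [subdivide_adj_some]
    rintro ⟨-, hs⟩
    exact hs rfl
  set F : W × W → ℕ := fun p =>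
    if h : H.Adj p.1 p.2 ∧ r p.1 < r p.2 then (d.P p.1 p.2 h.1).length - 1 else 0 with hFdef
  set T : Option W × Option W → ℕ := fun p =>
    if h : (SubdivideEdge H x y).Adj p.1 p.2 ∧ r' p.1 < r' p.2
    then ((stepData d hxy e q hp hlen).P p.1 p.2 h.1).length - 1 else 0 with hTdef
  have hBsplit : measure d r = (∑ p ∈ Finset.univ.erase (x, y), F p) + F (x, y) := by
    rw [measure, ← Finset.sum_erase_add Finset.univ _ (Finset.mem_univ (x, y))]
  have hFxy : F (x, y) = q.length := by
    rw [hFdef]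
    simp only
    rw [dif_pos ⟨hxy, hrxy⟩]
    have : (d.P x y hxy).length = q.length + 1 := by rw [hp]; simp
    omega
  have hTnn : T (none, none) = 0 := dif_neg (fun h => subdivide_not_adj_none h.1)
  have hTsn : ∀ u : W, T (some u, none) = 0 := by
    intro u
    refine dif_neg fun h => ?_
    have := h.2
    simp [hr'def] at this
  have hTny : (∑ v : W, T (none, some v)) = q.length - 1 := by
    rw [Finset.sum_eq_single y]
    · have hadj : (SubdivideEdge H x y).Adj none (some y) :=
        subdivide_adj_none_some.mpr (Or.inr rfl)
      have hlt : r' none < r' (some y) := by simp [hr'def]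
      rw [hTdef]
      simp only
      rw [dif_pos ⟨hadj, hlt⟩]
      have : ((stepData d hxy e q hp hlen).P none (some y) hadj).length = q.length :=
        length_stepP_none_y d e q hadj (Ne.symm hxy.ne)
      omega
    · intro v _ hvy
      by_cases hvx : v = x
      · subst hvx
        have hadj : (SubdivideEdge H v y).Adj none (some v) :=
          subdivide_adj_none_some.mpr (Or.inl rfl)
        have hlt : r' none < r' (some v) := by simp [hr'def]
        rw [hTdef]
        simp only
        rw [dif_pos ⟨hadj, hlt⟩]
        have : ((stepData d hxy e q hp hlen).P none (some v) hadj).length = 1 :=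
          length_stepP_none_x d e q hadj
        omega
      · refine dif_neg fun h => ?_
        rcases subdivide_adj_none_some.mp h.1 with h1 | h1
        · exact hvx h1
        · exact hvy h1
    · intro h
      exact absurd (Finset.mem_univ y) h
  have key : ∀ p : W × W, p ≠ (x, y) → T (some p.1, some p.2) = F p := by
    rintro ⟨u, v⟩ huv
    by_cases h1 : (SubdivideEdge H x y).Adj (some u) (some v) ∧ r' (some u) < r' (some v)
    · obtain ⟨hadj, hss⟩ := subdivide_adj_some.mp h1.1
      have hlt : r u < r v := by
        have := h1.2
        simpa [hr'def] using this
      rw [hTdef, hFdef]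
      simp only
      rw [dif_pos h1, dif_pos ⟨hadj, hlt⟩]
      rfl
    · rw [hTdef, hFdef]
      simp only
      rw [dif_neg h1, dif_neg]
      rintro ⟨hadj, hlt⟩
      apply h1
      have hss : s(u, v) ≠ s(x, y) := by
        intro hs
        rw [Sym2.eq_iff] at hs
        rcases hs with ⟨rfl, rfl⟩ | ⟨rfl, rfl⟩
        · exact huv rfl
        · omega
      exact ⟨subdivide_adj_some.mpr ⟨hadj, hss⟩, by simp [hr'def]; omega⟩
  have hAsplit : measure (stepData d hxy e q hp hlen) r'
      = (q.length - 1) + ∑ p ∈ Finset.univ.erase (x, y), F p := by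
    have h0 : measure (stepData d hxy e q hp hlen) r' = ∑ p : Option W × Option W, T p := rfl
    rw [h0, Fintype.sum_prod_type]
    simp only [Fintype.sum_option]
    rw [hTnn, hTny, zero_add]
    simp only [hTsn, zero_add]
    have h2 : (∑ u : W, ∑ v : W, T (some u, some v)) = ∑ p : W × W, T (some p.1, some p.2) :=
      (Fintype.sum_prod_type (f := fun p : W × W => T (some p.1, some p.2))).symm
    rw [h2, ← Finset.sum_erase_add Finset.univ _ (Finset.mem_univ (x, y))]
    have h3 : T (some x, some y) = 0 := dif_neg (fun h => hnewadj h.1)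
    rw [h3, add_zero]
    rw [Finset.sum_congr rfl (fun p hp => key p (Finset.ne_of_mem_erase hp))]
  rw [hAsplit, hBsplit, hFxy]
  omega

end Measure

theorem main {V : Type} {G : SimpleGraph V} (n : ℕ) :
    ∀ {W : Type} [Fintype W] {H : SimpleGraph W} (d : SubData H G) (r : W → ℕ),
      Function.Injective r → measure d r ≤ n → IsTopologicalMinor H G := by
  induction n with
  | zero =>
    intro W _ H d r hr hn
    refine base_case d r hr fun i j h hij => ?_
    have h0 : measure d r = 0 := Nat.le_zero.mp hn
    rw [measure, Finset.sum_eq_zero_iff] at h0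
    have h2 := h0 (i, j) (Finset.mem_univ _)
    rw [dif_pos ⟨h, hij⟩] at h2
    have h1 := length_pos d h
    have h3 : (d.P i j h).length - 1 = 0 := h2
    omega
  | succ n ih =>
    intro W _ H d r hr hn
    by_cases hex : ∃ x, ∃ y, ∃ h : H.Adj x y, r x < r y ∧ 2 ≤ (d.P x y h).length
    · obtain ⟨x, y, hxy, hrxy, hlen⟩ := hex
      obtain ⟨w0, e, q, hp⟩ := Walk.exists_eq_cons_of_ne
        (fun hbxy => hxy.ne (d.binj hbxy)) (d.P x y hxy)
      have hr' : Function.Injective (fun o : Option W => o.elim 0 fun w => r w + 1) := by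
        intro o1 o2 h12
        match o1, o2 with
        | none, none => rfl
        | none, some m => simp at h12
        | some m, none => simp at h12
        | some m1, some m2 =>
          simp only [Option.elim] at h12
          exact congrArg some (hr (by omega))
      have hms := measure_step d hxy e q hp hlen r hrxy
      obtain ⟨U, K, hsub, hcopy⟩ := ih (stepData d hxy e q hp hlen)
        (fun o : Option W => o.elim 0 fun w => r w + 1) hr' (by omega)
      exact ⟨U, K, IsSubdivision.step x y hxy hsub, hcopy⟩
    · push_neg at hex
      refine base_case d r hr fun i j h hij => ?_
      have h1 := length_pos d h
      have h2 := hex i j h hij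
      omega

end TMA

namespace TMA

open SimpleGraph Walk Function

attribute [local instance] Classical.propDecidable

lemma exists_first_hit {α : Type} {C : SimpleGraph α} {a b : α} (Q : C.Walk a b) (S : Set α)
    (hb : b ∈ S) : ∃ c, c ∈ S ∧ ∃ Q' : C.Walk a c, Q'.IsPath ∧
      (∀ t ∈ Q'.support, t ∈ S → t = c) := by
  induction Q with
  | nil => exact ⟨_, hb, Walk.nil, Walk.IsPath.nil, fun t ht _ => by simpa using ht⟩
  | @cons u v w h p ih =>
    by_cases hu : u ∈ S
    · exact ⟨u, hu, Walk.nil, Walk.IsPath.nil, by simp⟩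
    · obtain ⟨c, hc, Q', hQ'path, hQ'meet⟩ := ih hb
      refine ⟨c, hc, (Walk.cons h Q').bypass, Walk.bypass_isPath _, ?_⟩
      intro t ht htS
      have h2 := Walk.support_bypass_subset _ ht
      rw [Walk.support_cons] at h2
      rcases List.mem_cons.mp h2 with rfl | h3
      · exact absurd htS hu
      · exact hQ'meet t h3 htS

lemma spider {α : Type} {C : SimpleGraph α} (hC : C.Connected) (t0 t1 t2 : α) :
    ∃ (c : α) (L0 : C.Walk c t0) (L1 : C.Walk c t1) (L2 : C.Walk c t2),
      L0.IsPath ∧ L1.IsPath ∧ L2.IsPath ∧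
      (∀ t, t ∈ L0.support → t ∈ L1.support → t = c) ∧
      (∀ t, t ∈ L0.support → t ∈ L2.support → t = c) ∧
      (∀ t, t ∈ L1.support → t ∈ L2.support → t = c) := by
  obtain ⟨P⟩ := hC.preconnected t0 t1
  have hP0 : P.bypass.IsPath := Walk.bypass_isPath P
  set P0 := P.bypass with hP0def
  obtain ⟨Q⟩ := hC.preconnected t2 t0
  have hb : t0 ∈ {v | v ∈ P0.support} := P0.start_mem_support
  obtain ⟨c, hcS, Q', hQ'path, hmeet⟩ := exists_first_hit Q _ hb
  have hcP : c ∈ P0.support := hcS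
  refine ⟨c, (P0.takeUntil c hcP).reverse, P0.dropUntil c hcP, Q'.reverse,
    (hP0.takeUntil hcP).reverse, hP0.dropUntil hcP, hQ'path.reverse, ?_, ?_, ?_⟩
  · intro t h0 h1
    rw [Walk.support_reverse, List.mem_reverse] at h0
    have hceq := Walk.support_eq_cons (P0.dropUntil c hcP)
    rw [hceq, List.mem_cons] at h1
    rcases h1 with rfl | h1'
    · rfl
    · exfalso
      have hnd2 : ((P0.takeUntil c hcP).support ++ (P0.dropUntil c hcP).support.tail).Nodup := by
        rw [← Walk.support_append, Walk.take_spec]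
        exact hP0.support_nodup
      exact (List.disjoint_of_nodup_append hnd2) h0 h1'
  · intro t h0 h2
    rw [Walk.support_reverse, List.mem_reverse] at h0 h2
    exact hmeet t h2 (Walk.support_takeUntil_subset _ hcP h0)
  · intro t h1 h2
    rw [Walk.support_reverse, List.mem_reverse] at h2
    exact hmeet t h2 (Walk.support_dropUntil_subset _ hcP h1)

lemma legs {α ι : Type} {C : SimpleGraph α} (hC : C.Connected) (S : Set ι) (hfin : S.Finite)
    (h3 : S.ncard ≤ 3) (a : ι → α) :
    ∃ c : α, ∃ L : ∀ j ∈ S, C.Walk c (a j),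
      (∀ j hj, (L j hj).IsPath) ∧
      (∀ j hj j' hj', j ≠ j' → ∀ t, t ∈ (L j hj).support → t ∈ (L j' hj').support → t = c) := by
  haveI := hfin.fintype
  have hcard : Fintype.card S ≤ Fintype.card (Fin 3) := by
    rw [Fintype.card_fin, ← Nat.card_eq_fintype_card, Nat.card_coe_set_eq]
    exact h3
  obtain ⟨emb⟩ : Nonempty (S ↪ Fin 3) := Function.Embedding.nonempty_of_card_le hcard
  haveI hne : Nonempty α := hC.nonempty
  set z : α := Classical.arbitrary α with hz
  set tfun : Fin 3 → α := fun m => if h : ∃ s : S, emb s = m then a h.choose else z with htfun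
  obtain ⟨c, L0, L1, L2, p0, p1, p2, d01, d02, d12⟩ := spider hC (tfun 0) (tfun 1) (tfun 2)
  let WL : ∀ m : Fin 3, C.Walk c (tfun m) := fun m =>
    match m with
    | ⟨0, _⟩ => L0
    | ⟨1, _⟩ => L1
    | ⟨2, _⟩ => L2
  have pathWL : ∀ m, (WL m).IsPath := fun m =>
    match m with
    | ⟨0, _⟩ => p0
    | ⟨1, _⟩ => p1
    | ⟨2, _⟩ => p2
  have disjWL : ∀ m m', m ≠ m' →
      ∀ t, t ∈ (WL m).support → t ∈ (WL m').support → t = c := fun m m' =>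
    match m, m' with
    | ⟨0, _⟩, ⟨0, _⟩ => fun hne => absurd rfl hne
    | ⟨0, _⟩, ⟨1, _⟩ => fun _ => d01
    | ⟨0, _⟩, ⟨2, _⟩ => fun _ => d02
    | ⟨1, _⟩, ⟨0, _⟩ => fun _ t h1 h0 => d01 t h0 h1
    | ⟨1, _⟩, ⟨1, _⟩ => fun hne => absurd rfl hne
    | ⟨1, _⟩, ⟨2, _⟩ => fun _ => d12
    | ⟨2, _⟩, ⟨0, _⟩ => fun _ t h2 h0 => d02 t h0 h2
    | ⟨2, _⟩, ⟨1, _⟩ => fun _ t h2 h1 => d12 t h1 h2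
    | ⟨2, _⟩, ⟨2, _⟩ => fun hne => absurd rfl hne
  have hend : ∀ (j : ι) (hj : j ∈ S), tfun (emb ⟨j, hj⟩) = a j := by
    intro j hj
    have hex : ∃ s : S, emb s = emb ⟨j, hj⟩ := ⟨⟨j, hj⟩, rfl⟩
    have h1 : tfun (emb ⟨j, hj⟩) = a hex.choose := by
      rw [htfun]
      simp only
      rw [dif_pos hex]
    have h2 : (hex.choose : ι) = j := congrArg Subtype.val (emb.injective hex.choose_spec)
    rw [h1, h2]
  refine ⟨c, fun j hj => (WL (emb ⟨j, hj⟩)).copy rfl (hend j hj), fun j hj => ?_, ?_⟩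
  · rw [Walk.isPath_copy]
    exact pathWL _
  · intro j hj j' hj' hne t ht ht'
    rw [Walk.support_copy] at ht ht'
    have hembne : emb ⟨j, hj⟩ ≠ emb ⟨j', hj'⟩ := by
      intro he
      exact hne (congrArg Subtype.val (emb.injective he))
    exact disjWL _ _ hembne t ht ht'

end TMA

namespace TMA

open SimpleGraph Walk Function

attribute [local instance] Classical.propDecidable

lemma exists_subData {V W : Type} [Fintype V] [Fintype W] {G : SimpleGraph V}
    {H : SimpleGraph W} (hm : IsMinor H G) (hd : maxDeg H ≤ 3) :
    Nonempty (SubData H G) := by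
  obtain ⟨f, hnef, hdisj, hconn, hadj⟩ := hm
  have hsets : ∀ i j (t : V), i ≠ j → t ∈ f i → t ∈ f j → False :=
    fun i j t hne h1 h2 => Set.disjoint_left.mp (hdisj hne) h1 h2
  choose uu huu vv hvv huv using hadj
  set r : W → ℕ := fun w => (Fintype.equivFin W w : ℕ) with hrdef
  have hr : Function.Injective r :=
    fun w1 w2 h => (Fintype.equivFin W).injective (Fin.ext h)
  set A : ∀ i j, H.Adj i j → V := fun i j h =>
    if r i < r j then uu i j h else vv j i h.symm with hAdef
  have hA1 : ∀ i j (h : H.Adj i j), A i j h ∈ f i := by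
    intro i j h
    rw [hAdef]
    by_cases hrr : r i < r j
    · simp only [if_pos hrr]; exact huu i j h
    · simp only [if_neg hrr]; exact hvv j i h.symm
  have hA2 : ∀ i j (h : H.Adj i j), G.Adj (A i j h) (A j i h.symm) := by
    intro i j h
    rw [hAdef]
    rcases lt_trichotomy (r i) (r j) with hrr | hrr | hrr
    · have hrr' : ¬ r j < r i := by omega
      simp only [if_pos hrr, if_neg hrr']
      exact huv i j h
    · exact absurd (hr hrr) h.ne
    · have hrr' : ¬ r i < r j := by omega
      simp only [if_neg hrr', if_pos hrr]
      exact (huv j i h.symm).symm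
  have hcard : ∀ i, (H.neighborSet i).ncard ≤ 3 := by
    intro i
    exact le_trans (Finset.le_sup (f := fun v => (H.neighborSet v).ncard) (Finset.mem_univ i)) hd
  have hptne : ∀ i, Nonempty ↥(f i) := fun i => (hconn i).nonempty
  set att : ∀ i, W → ↥(f i) := fun i j =>
    if h : H.Adj i j then ⟨A i j h, hA1 i j h⟩ else (hptne i).some with hattdef
  have hatt : ∀ i j (h : H.Adj i j), att i j = ⟨A i j h, hA1 i j h⟩ := by
    intro i j h
    rw [hattdef]
    simp only
    rw [dif_pos h]
  have hlegs := fun i =>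
    legs (hconn i) (H.neighborSet i) (Set.toFinite _) (hcard i) (att i)
  choose c L hLpath hLdisj using hlegs
  -- the inclusion homomorphism
  let ι : ∀ i, G.induce (f i) →g G := fun i => (SimpleGraph.Embedding.induce (f i)).toHom
  have hιinj : ∀ i, Function.Injective ⇑(ι i) := fun i a b hab => Subtype.val_injective hab
  -- the legs mapped into G
  let legV : ∀ i j (h : H.Adj i j), G.Walk (c i : V) (A i j h) := fun i j h =>
    ((L i j h).copy rfl (hatt i j h)).map (ι i)
  have hlegV_path : ∀ i j (h : H.Adj i j), (legV i j h).IsPath := by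
    intro i j h
    exact Walk.map_isPath_of_injective (hιinj i)
      ((Walk.isPath_copy _ _ _).mpr (hLpath i j h))
  have hlegV_sub : ∀ i j (h : H.Adj i j) t, t ∈ (legV i j h).support → t ∈ f i := by
    intro i j h t ht
    rw [show (legV i j h).support = ((L i j h).copy rfl (hatt i j h)).support.map (ι i) from
      Walk.support_map _ _] at ht
    obtain ⟨s, _, rfl⟩ := List.mem_map.mp ht
    exact s.2
  have core : ∀ i j j' (h : H.Adj i j) (h' : H.Adj i j'), j ≠ j' →
      ∀ t, t ∈ (legV i j h).support → t ∈ (legV i j' h').support → t = (c i : V) := by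
    intro i j j' h h' hne t ht ht'
    rw [show (legV i j h).support = ((L i j h).copy rfl (hatt i j h)).support.map (ι i) from
      Walk.support_map _ _] at ht
    rw [show (legV i j' h').support = ((L i j' h').copy rfl (hatt i j' h')).support.map (ι i) from
      Walk.support_map _ _] at ht'
    obtain ⟨s, hs, rfl⟩ := List.mem_map.mp ht
    obtain ⟨s', hs', hss⟩ := List.mem_map.mp ht'
    have hss' : s' = s := Subtype.val_injective hss
    subst hss'
    rw [Walk.support_copy] at hs hs'
    exact congrArg Subtype.val (hLdisj i j h j' h' hne s' hs hs')
  -- the connecting paths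
  let P : ∀ i j, H.Adj i j → G.Walk (c i : V) (c j : V) := fun i j h =>
    (legV i j h).append (Walk.cons (hA2 i j h) (legV j i h.symm).reverse)
  have memP : ∀ i j (h : H.Adj i j) t, t ∈ (P i j h).support ↔
      t ∈ (legV i j h).support ∨ t ∈ (legV j i h.symm).support := by
    intro i j h t
    show t ∈ ((legV i j h).append (Walk.cons (hA2 i j h) (legV j i h.symm).reverse)).support ↔ _
    rw [Walk.support_append, List.mem_append, Walk.support_cons, List.tail_cons,
      Walk.support_reverse, List.mem_reverse]
  refine ⟨⟨fun i => (c i : V), ?_, P, ?_, ?_, ?_⟩⟩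
  · -- injectivity
    intro i j hij
    by_contra hne
    have hij' : (c i : V) = (c j : V) := hij
    refine hsets i j (c i : V) hne (c i).2 ?_
    rw [hij']
    exact (c j).2
  · -- paths
    intro i j h
    apply Walk.IsPath.mk'
    show (((legV i j h).append (Walk.cons (hA2 i j h) (legV j i h.symm).reverse)).support).Nodup
    rw [Walk.support_append, Walk.support_cons, List.tail_cons]
    apply List.Nodup.append
    · exact (hlegV_path i j h).support_nodup
    · rw [Walk.support_reverse]
      exact List.nodup_reverse.mpr (hlegV_path j i h.symm).support_nodup
    · intro t ht ht'
      rw [Walk.support_reverse, List.mem_reverse] at ht'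
      exact hsets i j t h.ne (hlegV_sub i j h t ht) (hlegV_sub j i h.symm t ht')
  · -- disjointness
    intro i j k l h1 h2 hne12 t ht1 ht2
    rw [memP] at ht1 ht2
    rcases ht1 with ht1 | ht1 <;> rcases ht2 with ht2 | ht2
    · obtain rfl : i = k := by
        by_contra hc
        exact hsets i k t hc (hlegV_sub _ _ _ _ ht1) (hlegV_sub _ _ _ _ ht2)
      have hjl : j ≠ l := by
        intro hh
        exact hne12 (by rw [hh])
      have := core i j l h1 h2 hjl t ht1 ht2
      exact ⟨Or.inl this, Or.inl this⟩
    · obtain rfl : i = l := by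
        by_contra hc
        exact hsets i l t hc (hlegV_sub _ _ _ _ ht1) (hlegV_sub _ _ _ _ ht2)
      have hjk : j ≠ k := by
        intro hh
        subst hh
        exact hne12 Sym2.eq_swap.symm
      have := core i j k h1 h2.symm hjk t ht1 ht2
      exact ⟨Or.inl this, Or.inr this⟩
    · obtain rfl : j = k := by
        by_contra hc
        exact hsets j k t hc (hlegV_sub _ _ _ _ ht1) (hlegV_sub _ _ _ _ ht2)
      have hil : i ≠ l := by
        intro hh
        subst hh
        exact hne12 Sym2.eq_swap.symm
      have := core j i l h1.symm h2 hil t ht1 ht2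
      exact ⟨Or.inr this, Or.inl this⟩
    · obtain rfl : j = l := by
        by_contra hc
        exact hsets j l t hc (hlegV_sub _ _ _ _ ht1) (hlegV_sub _ _ _ _ ht2)
      have hik : i ≠ k := by
        intro hh
        exact hne12 (by rw [hh])
      have := core j i k h1.symm h2.symm hik t ht1 ht2
      exact ⟨Or.inr this, Or.inr this⟩
  · -- bmem
    intro i j h m hm
    rw [memP] at hm
    rcases hm with hm | hm
    · left
      by_contra hc
      exact hsets m i (c m : V) hc (c m).2 (hlegV_sub _ _ _ _ hm)
    · right
      by_contra hc
      exact hsets m j (c m : V) hc (c m).2 (hlegV_sub _ _ _ _ hm)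

end TMA


/-- If `H` is a minor of `G` and `Δ(H) ≤ 3`, then `H` is a topological minor of `G`. -/
theorem topologicalMinor_of_minor_of_maxDeg_le_three {V W : Type} [Fintype V] [Fintype W]
    [Nonempty V] [Nonempty W] (G : SimpleGraph V) (H : SimpleGraph W)
    (hm : IsMinor H G) (hd : maxDeg H ≤ 3) : IsTopologicalMinor H G := by
  obtain ⟨d⟩ := TMA.exists_subData hm hd
  have hr : Function.Injective (fun w => ((Fintype.equivFin W w : ℕ))) :=
    fun w1 w2 h => (Fintype.equivFin W).injective (Fin.ext h)
  exact TMA.main (TMA.measure d fun w => (Fintype.equivFin W w : ℕ)) d _ hr le_rfl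
end

section
/- If K_5 is a minor of G, then G contains a subdivision of K_{3,3} or a subdivision of K_5 as a subgraph. -/
open SimpleGraph

set_option linter.unusedSectionVars false
set_option linter.unusedVariables false
set_option maxHeartbeats 1000000

open SimpleGraph.Walk

section Subdiv
variable {W : Type} {H : SimpleGraph W} {x y : W}

lemma subdivideEdge_adj_iff {a b : Option W} :
    (SubdivideEdge H x y).Adj a b ↔
      (∃ i j, a = some i ∧ b = some j ∧ H.Adj i j ∧ s(i, j) ≠ s(x, y)) ∨
      (a = none ∧ (b = some x ∨ b = some y)) ∨
      (b = none ∧ (a = some x ∨ a = some y)) := by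
  rw [SubdivideEdge, fromRel_adj]
  constructor
  · rintro ⟨hne, h | h⟩
    · rcases h with ⟨u, v, rfl, rfl, huv, hs⟩ | ⟨rfl, h⟩
      · exact Or.inl ⟨u, v, rfl, rfl, huv, hs⟩
      · exact Or.inr (Or.inl ⟨rfl, h⟩)
    · rcases h with ⟨u, v, rfl, rfl, huv, hs⟩ | ⟨rfl, h⟩
      · refine Or.inl ⟨v, u, rfl, rfl, huv.symm, ?_⟩
        rwa [Sym2.eq_swap]
      · exact Or.inr (Or.inr ⟨rfl, h⟩)
  · rintro (⟨i, j, rfl, rfl, hij, hs⟩ | ⟨rfl, rfl | rfl⟩ | ⟨rfl, rfl | rfl⟩)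
    · exact ⟨by simpa using hij.ne, Or.inl (Or.inl ⟨i, j, rfl, rfl, hij, hs⟩)⟩
    · exact ⟨by simp, Or.inl (Or.inr ⟨rfl, Or.inl rfl⟩)⟩
    · exact ⟨by simp, Or.inl (Or.inr ⟨rfl, Or.inr rfl⟩)⟩
    · exact ⟨by simp, Or.inr (Or.inr ⟨rfl, Or.inl rfl⟩)⟩
    · exact ⟨by simp, Or.inr (Or.inr ⟨rfl, Or.inr rfl⟩)⟩

lemma adj_none_some_iff {u : W} :
    (SubdivideEdge H x y).Adj none (some u) ↔ u = x ∨ u = y := by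
  rw [subdivideEdge_adj_iff]
  constructor
  · rintro (⟨i, j, h, _⟩ | ⟨-, h | h⟩ | ⟨h, -⟩)
    · exact absurd h (by simp)
    · exact Or.inl (by injection h)
    · exact Or.inr (by injection h)
    · exact absurd h (by simp)
  · rintro (rfl | rfl)
    · exact Or.inr (Or.inl ⟨rfl, Or.inl rfl⟩)
    · exact Or.inr (Or.inl ⟨rfl, Or.inr rfl⟩)

lemma adj_some_some_iff {i j : W} :
    (SubdivideEdge H x y).Adj (some i) (some j) ↔ H.Adj i j ∧ s(i, j) ≠ s(x, y) := by
  rw [subdivideEdge_adj_iff]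
  constructor
  · rintro (⟨i', j', hi, hj, hij, hs⟩ | ⟨h, -⟩ | ⟨h, -⟩)
    · injection hi with hi'
      injection hj with hj'
      subst hi'; subst hj'
      exact ⟨hij, hs⟩
    · exact absurd h (by simp)
    · exact absurd h (by simp)
  · rintro ⟨hij, hs⟩
    exact Or.inl ⟨i, j, rfl, rfl, hij, hs⟩

lemma sym2_some_ne {i j k l : W} (h : s(some i, some j) ≠ s(some k, some l) ) :
    s(i, j) ≠ s(k, l) := by
  intro heq
  apply h
  rw [Sym2.eq_iff] at heq ⊢
  rcases heq with ⟨rfl, rfl⟩ | ⟨rfl, rfl⟩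
  · exact Or.inl ⟨rfl, rfl⟩
  · exact Or.inr ⟨rfl, rfl⟩

end Subdiv

def extendB {V W : Type} (b : W → V) (m : V) : Option W → V
  | none => m
  | some i => b i

lemma range_extendB {V W : Type} (b : W → V) (m : V) {v : V} :
    v ∈ Set.range (extendB b m) ↔ v = m ∨ v ∈ Set.range b := by
  constructor
  · rintro ⟨o, rfl⟩
    cases o with
    | none => exact Or.inl rfl
    | some i => exact Or.inr ⟨i, rfl⟩
  · rintro (rfl | ⟨i, rfl⟩)
    · exact ⟨none, rfl⟩
    · exact ⟨some i, rfl⟩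

section Ext
variable {V : Type} {G : SimpleGraph V} {W : Type} {H : SimpleGraph W} {x y : W}

noncomputable def extLeg (b : W → V) (m : V)
    (hm : G.Adj (b x) m) (q : G.Walk m (b y)) (u : W)
    (h : (SubdivideEdge H x y).Adj none (some u)) : G.Walk m (b u) :=
  letI := Classical.decEq W
  if hx : u = x then (Walk.cons hm.symm Walk.nil).copy rfl (congrArg b hx.symm)
  else q.copy rfl (congrArg b ((adj_none_some_iff.mp h).resolve_left hx).symm)

lemma extLeg_x (b : W → V) (m : V) (hm : G.Adj (b x) m) (q : G.Walk m (b y))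
    (h : (SubdivideEdge H x y).Adj none (some x)) :
    extLeg b m hm q x h = Walk.cons hm.symm Walk.nil := by
  rw [extLeg, dif_pos rfl]
  rfl

lemma extLeg_y (hxy : x ≠ y) (b : W → V) (m : V) (hm : G.Adj (b x) m) (q : G.Walk m (b y))
    (h : (SubdivideEdge H x y).Adj none (some y)) :
    extLeg b m hm q y h = q := by
  rw [extLeg, dif_neg (Ne.symm hxy)]
  rfl

noncomputable def extSys (b : W → V) (m : V)
    (hm : G.Adj (b x) m) (q : G.Walk m (b y))
    (P : ∀ i j, H.Adj i j → G.Walk (b i) (b j)) :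
    ∀ a c : Option W, (SubdivideEdge H x y).Adj a c → G.Walk (extendB b m a) (extendB b m c)
  | some i, some j, h => P i j (adj_some_some_iff.mp h).1
  | none, some u, h => extLeg b m hm q u h
  | some u, none, h => (extLeg b m hm q u h.symm).reverse
  | none, none, h => absurd rfl h.ne

lemma extSys_ss (b : W → V) (m : V) (hm : G.Adj (b x) m) (q : G.Walk m (b y)) (P) (i j : W)
    (h : (SubdivideEdge H x y).Adj (some i) (some j)) :
    extSys b m hm q P (some i) (some j) h = P i j (adj_some_some_iff.mp h).1 := rfl

lemma extSys_ns (b : W → V) (m : V) (hm : G.Adj (b x) m) (q : G.Walk m (b y)) (P) (u : W)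
    (h : (SubdivideEdge H x y).Adj none (some u)) :
    extSys b m hm q P none (some u) h = extLeg b m hm q u h := rfl

lemma extSys_sn (b : W → V) (m : V) (hm : G.Adj (b x) m) (q : G.Walk m (b y)) (P) (u : W)
    (h : (SubdivideEdge H x y).Adj (some u) none) :
    extSys b m hm q P (some u) none h = (extLeg b m hm q u h.symm).reverse := rfl

end Ext

section Master
variable {V : Type} [Fintype V] {G : SimpleGraph V}

lemma master_base {W : Type} (H : SimpleGraph W) (b : W → V)
    (hbinj : Function.Injective b)
    (hadj : ∀ i j, H.Adj i j → G.Adj (b i) (b j)) :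
    IsTopologicalMinor H G :=
  ⟨W, H, IsSubdivision.of_iso Iso.refl,
    ⟨{ toFun := b, map_rel' := fun h => hadj _ _ h }, hbinj⟩⟩

lemma cons_internal {u w : V} {p : G.Walk u w} (hp : p.IsPath) (hlen : 2 ≤ p.length) :
    ∃ (m : V) (hm : G.Adj u m) (q : G.Walk m w), p = Walk.cons hm q ∧ m ≠ u ∧ m ≠ w := by
  have hnil : ¬ p.Nil := by rw [Walk.not_nil_iff_lt_length]; omega
  obtain ⟨m, hm, q, rfl⟩ := Walk.not_nil_iff.mp hnil
  have hnodup := hp.support_nodup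
  rw [support_cons] at hnodup
  refine ⟨m, hm, q, rfl, ?_, ?_⟩
  · intro h
    exact (List.nodup_cons.mp hnodup).1 (h ▸ q.start_mem_support)
  · intro h
    subst h
    have hq : q.length ≥ 1 := by
      rw [Walk.length_cons] at hlen; omega
    have := (Walk.isPath_iff_eq_nil (p := q)).mp hp.of_cons
    rw [this] at hq
    simp at hq

lemma master (n : ℕ) : ∀ (W : Type) [Fintype W] (H : SimpleGraph W) (b : W → V)
    (P : ∀ i j, H.Adj i j → G.Walk (b i) (b j)),
    Function.Injective b →
    (∀ i j (h : H.Adj i j), (P i j h).IsPath) →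
    (∀ i j (h : H.Adj i j), ∀ v ∈ (P i j h).support, v ∈ Set.range b → v = b i ∨ v = b j) →
    (∀ i j k l (h : H.Adj i j) (h' : H.Adj k l), s(i, j) ≠ s(k, l) →
      ∀ v, v ∈ (P i j h).support → v ∈ (P k l h').support →
        ∃ w : W, (w = i ∨ w = j) ∧ (w = k ∨ w = l) ∧ v = b w) →
    Fintype.card V - Fintype.card W ≤ n →
    IsTopologicalMinor H G := by
  induction n with
  | zero =>
    intro W _ H b P hbinj hC1 hC3 hC4 hn
    by_cases hlong : ∃ x y, ∃ (h : H.Adj x y), 2 ≤ (P x y h).length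
    · obtain ⟨x, y, hxy, hlen⟩ := hlong
      obtain ⟨m, hm, q, hcons, hmx, hmy⟩ := cons_internal (hC1 x y hxy) hlen
      have hmnr : m ∉ Set.range b := by
        rintro ⟨w, rfl⟩
        have hmem : b w ∈ (P x y hxy).support := by
          rw [hcons, support_cons]
          exact List.mem_cons_of_mem _ q.start_mem_support
        rcases hC3 x y hxy _ hmem ⟨w, rfl⟩ with h' | h'
        · exact hmx h'
        · exact hmy h'
      have hinj' : Function.Injective (extendB b m) := by
        rintro (_ | i) (_ | j) hij
        · rfl
        · exact absurd ⟨j, hij.symm⟩ hmnr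
        · exact absurd ⟨i, hij⟩ hmnr
        · exact congrArg some (hbinj hij)
      have := Fintype.card_le_of_injective _ hinj'
      rw [Fintype.card_option] at this
      omega
    · push_neg at hlong
      apply master_base H b hbinj
      intro i j h
      have h1 : (P i j h).length ≠ 0 := by
        intro h0
        exact h.ne (hbinj (Walk.eq_of_length_eq_zero h0))
      have h2 := hlong i j h
      have : (P i j h).length = 1 := by omega
      exact Walk.adj_of_length_eq_one this
  | succ n ih =>
    intro W _ H b P hbinj hC1 hC3 hC4 hn
    by_cases hlong : ∃ x y, ∃ (h : H.Adj x y), 2 ≤ (P x y h).length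
    swap
    · push_neg at hlong
      apply master_base H b hbinj
      intro i j h
      have h1 : (P i j h).length ≠ 0 := by
        intro h0
        exact h.ne (hbinj (Walk.eq_of_length_eq_zero h0))
      have h2 := hlong i j h
      have : (P i j h).length = 1 := by omega
      exact Walk.adj_of_length_eq_one this
    obtain ⟨x, y, hxy, hlen⟩ := hlong
    obtain ⟨m, hm, q, hcons, hmx, hmy⟩ := cons_internal (hC1 x y hxy) hlen
    -- basic facts
    have hqpath : q.IsPath := by
      have := hC1 x y hxy; rw [hcons] at this; exact this.of_cons
    have hnodup := (hC1 x y hxy).support_nodup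
    rw [hcons, support_cons] at hnodup
    have hbxq : b x ∉ q.support := (List.nodup_cons.mp hnodup).1
    have hqsub : ∀ v ∈ q.support, v ∈ (P x y hxy).support := by
      intro v hv
      rw [hcons, support_cons]
      exact List.mem_cons_of_mem _ hv
    have hmq : m ∈ q.support := q.start_mem_support
    have hmnr : m ∉ Set.range b := by
      rintro ⟨w, rfl⟩
      rcases hC3 x y hxy _ (hqsub _ hmq) ⟨w, rfl⟩ with h' | h'
      · exact hmx h'
      · exact hmy h'
    have hinj' : Function.Injective (extendB b m) := by
      rintro (_ | i) (_ | j) hij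
      · rfl
      · exact absurd ⟨j, hij.symm⟩ hmnr
      · exact absurd ⟨i, hij⟩ hmnr
      · exact congrArg some (hbinj hij)
    -- the extended system
    set H' := SubdivideEdge H x y with hH'
    set b' := extendB b m with hb'
    set P' := extSys b m hm q P with hP'
    -- support facts for legs
    have legPx : ∀ (h : H'.Adj none (some x)) (v : V),
        v ∈ (extLeg b m hm q x h).support ↔ (v = m ∨ v = b x) := by
      intro h v
      rw [extLeg_x]
      simp
    -- claims about old paths vs q / m / b x
    have claimM : ∀ i j (hij : H.Adj i j), s(i, j) ≠ s(x, y) →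
        m ∉ (P i j hij).support := by
      intro i j hij hs hmem
      obtain ⟨w, -, -, hw⟩ := hC4 i j x y hij hxy hs m hmem (hqsub _ hmq)
      exact hmnr ⟨w, hw.symm⟩
    have claimX : ∀ i j (hij : H.Adj i j), s(i, j) ≠ s(x, y) →
        ∀ v, v ∈ (P i j hij).support → (v = m ∨ v = b x) →
          v = b x ∧ (x = i ∨ x = j) := by
      intro i j hij hs v hv hvm
      rcases hvm with rfl | rfl
      · exact absurd hv (claimM i j hij hs)
      · obtain ⟨w, hw1, hw2, hw⟩ := hC4 i j x y hij hxy hs _ hv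
          (by rw [hcons, support_cons]; exact List.mem_cons_self)
        have : w = x := by
          rcases hw2 with rfl | rfl
          · rfl
          · exact (hbinj hw.symm).symm ▸ rfl
        subst this
        rcases hw1 with rfl | rfl
        · exact ⟨rfl, Or.inl rfl⟩
        · exact ⟨rfl, Or.inr rfl⟩
    have claimY : ∀ i j (hij : H.Adj i j), s(i, j) ≠ s(x, y) →
        ∀ v, v ∈ (P i j hij).support → v ∈ q.support →
          v = b y ∧ (y = i ∨ y = j) := by
      intro i j hij hs v hv hvq
      obtain ⟨w, hw1, hw2, rfl⟩ := hC4 i j x y hij hxy hs v hv (hqsub _ hvq)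
      have : w = y := by
        rcases hw2 with rfl | rfl
        · exact absurd hvq hbxq
        · rfl
      subst this
      rcases hw1 with rfl | rfl
      · exact ⟨rfl, Or.inl rfl⟩
      · exact ⟨rfl, Or.inr rfl⟩
    -- C1'
    have hC1' : ∀ a c (h : H'.Adj a c), (P' a c h).IsPath := by
      have legPath : ∀ u (h : H'.Adj none (some u)), (extLeg b m hm q u h).IsPath := by
        intro u h
        rcases adj_none_some_iff.mp h with rfl | rfl
        · rw [extLeg_x]
          simp [Walk.isPath_def, hmx]
        · rw [extLeg_y hxy.ne]
          exact hqpath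
      rintro (_ | u) (_ | w) h
      · exact absurd rfl h.ne
      · rw [hP', extSys_ns]; exact legPath w h
      · rw [hP', extSys_sn]; exact (legPath u h.symm).reverse
      · rw [hP', extSys_ss]; exact hC1 u w _
    -- C3'
    have hC3' : ∀ a c (h : H'.Adj a c), ∀ v ∈ (P' a c h).support,
        v ∈ Set.range b' → v = b' a ∨ v = b' c := by
      have legC3 : ∀ u (h : H'.Adj none (some u)) v,
          v ∈ (extLeg b m hm q u h).support → v ∈ Set.range b' → v = m ∨ v = b u := by
        intro u h v hv hvr
        rcases adj_none_some_iff.mp h with rfl | rfl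
        · exact (legPx h v).mp hv
        · rw [extLeg_y hxy.ne] at hv
          rcases (range_extendB b m).mp hvr with rfl | hvb
          · exact Or.inl rfl
          · rcases hC3 _ _ hxy v (hqsub _ hv) hvb with rfl | rfl
            · exact absurd hv hbxq
            · exact Or.inr rfl
      rintro (_ | u) (_ | w) h v hv hvr
      · exact absurd rfl h.ne
      · rw [hP', extSys_ns] at hv
        exact legC3 w h v hv hvr
      · rw [hP', extSys_sn] at hv
        replace hv : v ∈ (extLeg b m hm q u h.symm).support := by
          rw [← List.mem_reverse, ← Walk.support_reverse]; exact hv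
        exact (legC3 u h.symm v hv hvr).symm
      · rw [hP', extSys_ss] at hv
        rcases (range_extendB b m).mp hvr with rfl | hvb
        · exact absurd hv (claimM u w _ (adj_some_some_iff.mp h).2)
        · rcases hC3 u w _ v hv hvb with rfl | rfl
          · exact Or.inl rfl
          · exact Or.inr rfl
    -- C4'
    have hC4' : ∀ a c a' c' (h : H'.Adj a c) (h' : H'.Adj a' c'), s(a, c) ≠ s(a', c') →
        ∀ v, v ∈ (P' a c h).support → v ∈ (P' a' c' h').support →
          ∃ w : Option W, (w = a ∨ w = c) ∧ (w = a' ∨ w = c') ∧ v = b' w := by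
      -- membership description of every path in the new system, by unordered pair:
      have desc : ∀ a c (h : H'.Adj a c) v, v ∈ (P' a c h).support →
          (∃ i j, (a = some i ∧ c = some j ∨ a = some j ∧ c = some i) ∧
            ∃ (hij : H.Adj i j), s(i, j) ≠ s(x, y) ∧ v ∈ (P i j hij).support) ∨
          ((a = none ∧ c = some x ∨ a = some x ∧ c = none) ∧ (v = m ∨ v = b x)) ∨
          ((a = none ∧ c = some y ∨ a = some y ∧ c = none) ∧ v ∈ q.support) := by
        rintro (_ | u) (_ | w) h v hv
        · exact absurd rfl h.ne
        · rw [hP', extSys_ns] at hv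
          rcases adj_none_some_iff.mp h with rfl | rfl
          · exact Or.inr (Or.inl ⟨Or.inl ⟨rfl, rfl⟩, (legPx h v).mp hv⟩)
          · rw [extLeg_y hxy.ne] at hv
            exact Or.inr (Or.inr ⟨Or.inl ⟨rfl, rfl⟩, hv⟩)
        · rw [hP', extSys_sn] at hv
          replace hv : v ∈ (extLeg b m hm q u h.symm).support := by
            rw [← List.mem_reverse, ← Walk.support_reverse]; exact hv
          rcases adj_none_some_iff.mp h.symm with rfl | rfl
          · exact Or.inr (Or.inl ⟨Or.inr ⟨rfl, rfl⟩, (legPx h.symm v).mp hv⟩)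
          · rw [extLeg_y hxy.ne] at hv
            exact Or.inr (Or.inr ⟨Or.inr ⟨rfl, rfl⟩, hv⟩)
        · rw [hP', extSys_ss] at hv
          obtain ⟨hij, hs⟩ := adj_some_some_iff.mp h
          exact Or.inl ⟨u, w, Or.inl ⟨rfl, rfl⟩, hij, hs, hv⟩
      intro a c a' c' h h' hne v hv hv'
      rcases desc a c h v hv with ⟨i, j, hac, hij, hs, hmem⟩ | ⟨hac, hvm⟩ | ⟨hac, hvq⟩
      · rcases desc a' c' h' v hv' with ⟨k, l, hac', hkl, hs', hmem'⟩ | ⟨hac', hvm'⟩ | ⟨hac', hvq'⟩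
        · -- old vs old
          have hijkl : s(i, j) ≠ s(k, l) := by
            intro heq
            apply hne
            have e1 : s(a, c) = s(some i, some j) := by
              rcases hac with ⟨rfl, rfl⟩ | ⟨rfl, rfl⟩
              · rfl
              · exact Sym2.eq_swap
            have e2 : s(a', c') = s(some k, some l) := by
              rcases hac' with ⟨rfl, rfl⟩ | ⟨rfl, rfl⟩
              · rfl
              · exact Sym2.eq_swap
            rw [e1, e2]
            rw [Sym2.eq_iff] at heq ⊢
            rcases heq with ⟨rfl, rfl⟩ | ⟨rfl, rfl⟩
            · exact Or.inl ⟨rfl, rfl⟩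
            · exact Or.inr ⟨rfl, rfl⟩
          obtain ⟨w, hw1, hw2, hw⟩ := hC4 i j k l hij hkl hijkl v hmem hmem'
          refine ⟨some w, ?_, ?_, hw⟩
          · rcases hw1 with rfl | rfl
            · rcases hac with ⟨rfl, rfl⟩ | ⟨rfl, rfl⟩
              · exact Or.inl rfl
              · exact Or.inr rfl
            · rcases hac with ⟨rfl, rfl⟩ | ⟨rfl, rfl⟩
              · exact Or.inr rfl
              · exact Or.inl rfl
          · rcases hw2 with rfl | rfl
            · rcases hac' with ⟨rfl, rfl⟩ | ⟨rfl, rfl⟩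
              · exact Or.inl rfl
              · exact Or.inr rfl
            · rcases hac' with ⟨rfl, rfl⟩ | ⟨rfl, rfl⟩
              · exact Or.inr rfl
              · exact Or.inl rfl
        · -- old vs leg-x
          obtain ⟨hbx, hxij⟩ := claimX i j hij hs v hmem hvm'
          refine ⟨some x, ?_, ?_, hbx⟩
          · rcases hxij with rfl | rfl
            · rcases hac with ⟨rfl, rfl⟩ | ⟨rfl, rfl⟩
              · exact Or.inl rfl
              · exact Or.inr rfl
            · rcases hac with ⟨rfl, rfl⟩ | ⟨rfl, rfl⟩
              · exact Or.inr rfl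
              · exact Or.inl rfl
          · rcases hac' with ⟨rfl, rfl⟩ | ⟨rfl, rfl⟩
            · exact Or.inr rfl
            · exact Or.inl rfl
        · -- old vs leg-y
          obtain ⟨hby, hyij⟩ := claimY i j hij hs v hmem hvq'
          refine ⟨some y, ?_, ?_, hby⟩
          · rcases hyij with rfl | rfl
            · rcases hac with ⟨rfl, rfl⟩ | ⟨rfl, rfl⟩
              · exact Or.inl rfl
              · exact Or.inr rfl
            · rcases hac with ⟨rfl, rfl⟩ | ⟨rfl, rfl⟩
              · exact Or.inr rfl
              · exact Or.inl rfl
          · rcases hac' with ⟨rfl, rfl⟩ | ⟨rfl, rfl⟩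
            · exact Or.inr rfl
            · exact Or.inl rfl
      · rcases desc a' c' h' v hv' with ⟨k, l, hac', hkl, hs', hmem'⟩ | ⟨hac', hvm'⟩ | ⟨hac', hvq'⟩
        · -- leg-x vs old
          obtain ⟨hbx, hxkl⟩ := claimX k l hkl hs' v hmem' hvm
          refine ⟨some x, ?_, ?_, hbx⟩
          · rcases hac with ⟨rfl, rfl⟩ | ⟨rfl, rfl⟩
            · exact Or.inr rfl
            · exact Or.inl rfl
          · rcases hxkl with rfl | rfl
            · rcases hac' with ⟨rfl, rfl⟩ | ⟨rfl, rfl⟩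
              · exact Or.inl rfl
              · exact Or.inr rfl
            · rcases hac' with ⟨rfl, rfl⟩ | ⟨rfl, rfl⟩
              · exact Or.inr rfl
              · exact Or.inl rfl
        · -- leg-x vs leg-x : same unordered pair, contradiction
          exfalso
          apply hne
          rcases hac with ⟨rfl, rfl⟩ | ⟨rfl, rfl⟩ <;>
            rcases hac' with ⟨rfl, rfl⟩ | ⟨rfl, rfl⟩
          · rfl
          · exact Sym2.eq_swap
          · exact Sym2.eq_swap
          · rfl
        · -- leg-x vs leg-y : meet only at m
          have hvmm : v = m := by
            rcases hvm with rfl | rfl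
            · rfl
            · exact absurd hvq' hbxq
          refine ⟨none, ?_, ?_, hvmm⟩
          · rcases hac with ⟨rfl, rfl⟩ | ⟨rfl, rfl⟩
            · exact Or.inl rfl
            · exact Or.inr rfl
          · rcases hac' with ⟨rfl, rfl⟩ | ⟨rfl, rfl⟩
            · exact Or.inl rfl
            · exact Or.inr rfl
      · rcases desc a' c' h' v hv' with ⟨k, l, hac', hkl, hs', hmem'⟩ | ⟨hac', hvm'⟩ | ⟨hac', hvq'⟩
        · -- leg-y vs old
          obtain ⟨hby, hykl⟩ := claimY k l hkl hs' v hmem' hvq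
          refine ⟨some y, ?_, ?_, hby⟩
          · rcases hac with ⟨rfl, rfl⟩ | ⟨rfl, rfl⟩
            · exact Or.inr rfl
            · exact Or.inl rfl
          · rcases hykl with rfl | rfl
            · rcases hac' with ⟨rfl, rfl⟩ | ⟨rfl, rfl⟩
              · exact Or.inl rfl
              · exact Or.inr rfl
            · rcases hac' with ⟨rfl, rfl⟩ | ⟨rfl, rfl⟩
              · exact Or.inr rfl
              · exact Or.inl rfl
        · -- leg-y vs leg-x
          have hvmm : v = m := by
            rcases hvm' with rfl | rfl
            · rfl
            · exact absurd hvq hbxq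
          refine ⟨none, ?_, ?_, hvmm⟩
          · rcases hac with ⟨rfl, rfl⟩ | ⟨rfl, rfl⟩
            · exact Or.inl rfl
            · exact Or.inr rfl
          · rcases hac' with ⟨rfl, rfl⟩ | ⟨rfl, rfl⟩
            · exact Or.inl rfl
            · exact Or.inr rfl
        · -- leg-y vs leg-y : contradiction
          exfalso
          apply hne
          rcases hac with ⟨rfl, rfl⟩ | ⟨rfl, rfl⟩ <;>
            rcases hac' with ⟨rfl, rfl⟩ | ⟨rfl, rfl⟩
          · rfl
          · exact Sym2.eq_swap
          · exact Sym2.eq_swap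
          · rfl
    -- cardinality bound and recursion
    have hcard : Fintype.card V - Fintype.card (Option W) ≤ n := by
      have := Fintype.card_le_of_injective _ hinj'
      rw [Fintype.card_option] at this ⊢
      omega
    obtain ⟨U, K, hsub, hcopy⟩ := ih (Option W) H' b' P' hinj' hC1' hC3' hC4' hcard
    exact ⟨U, K, IsSubdivision.step x y hxy hsub, hcopy⟩

end Master

section WalkUtils2
variable {α : Type} [DecidableEq α] {C : SimpleGraph α}

lemma exists_firstHit_aux {a b : α} (w : C.Walk a b) (S : Set α) (hb : b ∈ S) :
    ∃ c ∈ S, ∃ p : C.Walk a c, (∀ v ∈ p.support, v ∈ w.support) ∧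
      (∀ v ∈ p.support, v ∈ S → v = c) := by
  induction w with
  | nil => exact ⟨_, hb, Walk.nil, by simp, fun v hv _ => by simpa using hv⟩
  | @cons u u' b h w ih =>
    by_cases ha : u ∈ S
    · exact ⟨u, ha, Walk.nil, by simp, fun v hv _ => by simpa using hv⟩
    · obtain ⟨c, hc, p, hsub, hfirst⟩ := ih hb
      refine ⟨c, hc, Walk.cons h p, ?_, ?_⟩
      · intro v hv
        rw [support_cons, List.mem_cons] at hv ⊢
        rcases hv with rfl | hv
        · exact Or.inl rfl
        · exact Or.inr (hsub v hv)
      · intro v hv hvS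
        rw [support_cons, List.mem_cons] at hv
        rcases hv with rfl | hv
        · exact absurd hvS ha
        · exact hfirst v hv hvS

lemma exists_firstHit {a b : α} (w : C.Walk a b) (S : Set α) (hb : b ∈ S) :
    ∃ c ∈ S, ∃ p : C.Walk a c, p.IsPath ∧ (∀ v ∈ p.support, v ∈ w.support) ∧
      (∀ v ∈ p.support, v ∈ S → v = c) := by
  obtain ⟨c, hc, p, hsub, hfirst⟩ := exists_firstHit_aux w S hb
  exact ⟨c, hc, p.bypass, p.bypass_isPath,
    fun v hv => hsub v (p.support_bypass_subset hv),
    fun v hv => hfirst v (p.support_bypass_subset hv)⟩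

lemma take_drop_inter {a b u : α} {p : C.Walk a b} (hp : p.IsPath) (h : u ∈ p.support) :
    ∀ v, v ∈ (p.takeUntil u h).support → v ∈ (p.dropUntil u h).support → v = u := by
  intro v hv1 hv2
  have hspec := p.take_spec h
  have hnodup : p.support.Nodup := hp.support_nodup
  rw [← hspec, support_append] at hnodup
  have hdisj := List.disjoint_of_nodup_append hnodup
  by_contra hne
  have : v ∈ (p.dropUntil u h).support.tail := by
    have := (p.dropUntil u h).support_eq_cons
    rw [this] at hv2
    rcases List.mem_cons.mp hv2 with h' | h'
    · exact absurd h' hne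
    · exact h'
  exact hdisj hv1 this

lemma isPath_append_cons {a b c d : α} {p : C.Walk a b} (e : C.Adj b c) {q : C.Walk c d}
    (hp : p.IsPath) (hq : q.IsPath) (hdisj : ∀ v ∈ p.support, v ∉ q.support) :
    (p.append (Walk.cons e q)).IsPath := by
  apply Walk.IsPath.mk'
  rw [support_append, support_cons, List.tail_cons]
  exact List.Nodup.append hp.support_nodup hq.support_nodup (fun v hv hv' => hdisj v hv hv')

lemma support_append_cons {a b c d : α} {p : C.Walk a b} (e : C.Adj b c) {q : C.Walk c d} :
    (p.append (Walk.cons e q)).support = p.support ++ q.support := by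
  rw [support_append, support_cons, List.tail_cons]

end WalkUtils2

section Assemble
variable {V : Type} [Fintype V] {G : SimpleGraph V}

lemma mem_cell_eq {W : Type} {cell : W → Set V} (hdisj : ∀ p q : W, p ≠ q → Disjoint (cell p) (cell q))
    {v : V} {a b_ : W} (ha : v ∈ cell a) (hb : v ∈ cell b_) : a = b_ := by
  by_contra hne
  exact Set.disjoint_left.mp (hdisj a b_ hne) ha hb

lemma assemble {W : Type} [Fintype W] (H : SimpleGraph W)
    (cell : W → Set V) (hdisj : ∀ p q : W, p ≠ q → Disjoint (cell p) (cell q))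
    (ctr : W → V) (hctr : ∀ p, ctr p ∈ cell p)
    (att : W → W → V)
    (hedge : ∀ p q (h : H.Adj p q), G.Adj (att p q) (att q p))
    (A : ∀ p q, H.Adj p q → G.Walk (ctr p) (att p q))
    (hApath : ∀ p q h, (A p q h).IsPath)
    (hAsub : ∀ p q (h : H.Adj p q), ∀ v ∈ (A p q h).support, v ∈ cell p)
    (hAdisj : ∀ p q q' (h : H.Adj p q) (h' : H.Adj p q'), q ≠ q' →
      ∀ v, v ∈ (A p q h).support → v ∈ (A p q' h').support → v = ctr p) :
    IsTopologicalMinor H G := by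
  classical
  set P : ∀ i j, H.Adj i j → G.Walk (ctr i) (ctr j) :=
    fun i j h => (A i j h).append (Walk.cons (hedge i j h) (A j i h.symm).reverse) with hPdef
  have hbinj : Function.Injective ctr := by
    intro p q hpq
    by_contra hne
    exact Set.disjoint_left.mp (hdisj p q hne) (hctr p) (hpq ▸ hctr q)
  have hsup : ∀ i j (h : H.Adj i j) v, v ∈ (P i j h).support ↔
      v ∈ (A i j h).support ∨ v ∈ (A j i h.symm).support := by
    intro i j h v
    rw [hPdef]
    rw [support_append_cons, List.mem_append, Walk.support_reverse, List.mem_reverse]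
  have key : ∀ p q p' q' (h : H.Adj p q) (h' : H.Adj p' q') v,
      v ∈ (A p q h).support → v ∈ (A p' q' h').support →
        p = p' ∧ (q = q' ∨ v = ctr p) := by
    intro p q p' q' h h' v hv hv'
    have hp : p = p' := mem_cell_eq hdisj (hAsub p q h v hv) (hAsub p' q' h' v hv')
    subst hp
    by_cases hq : q = q'
    · exact ⟨rfl, Or.inl hq⟩
    · exact ⟨rfl, Or.inr (hAdisj p q q' h h' hq v hv hv')⟩
  apply master (Fintype.card V) W H ctr P hbinj ?_ ?_ ?_ (by omega)
  · -- C1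
    intro i j h
    rw [hPdef]
    apply isPath_append_cons _ (hApath i j h) (hApath j i h.symm).reverse
    intro v hv hv'
    rw [Walk.support_reverse, List.mem_reverse] at hv'
    exact Set.disjoint_left.mp (hdisj i j h.ne) (hAsub i j h v hv) (hAsub j i h.symm v hv')
  · -- C3
    intro i j h v hv hvr
    obtain ⟨w, rfl⟩ := hvr
    rcases (hsup i j h _).mp hv with hv' | hv'
    · exact Or.inl (congrArg ctr (mem_cell_eq hdisj (hctr w) (hAsub i j h _ hv')))
    · exact Or.inr (congrArg ctr (mem_cell_eq hdisj (hctr w) (hAsub j i h.symm _ hv')))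
  · -- C4
    intro i j k l h h' hne v hv hv'
    have hsne : ∀ (a b c d : W), s(i,j) = s(a,b) → s(k,l) = s(c,d) → a = c → b = d → False := by
      intro a b c d e1 e2 e3 e4
      apply hne
      rw [e1, e2, e3, e4]
    rcases (hsup i j h _).mp hv with h1 | h1 <;> rcases (hsup k l h' _).mp hv' with h2 | h2
    · obtain ⟨rfl, hq⟩ := key _ _ _ _ _ _ v h1 h2
      rcases hq with rfl | rfl
      · exact absurd rfl hne
      · exact ⟨i, Or.inl rfl, Or.inl rfl, rfl⟩
    · obtain ⟨rfl, hq⟩ := key _ _ _ _ _ _ v h1 h2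
      rcases hq with rfl | rfl
      · exact absurd (Sym2.eq_swap) hne
      · exact ⟨i, Or.inl rfl, Or.inr rfl, rfl⟩
    · obtain ⟨rfl, hq⟩ := key _ _ _ _ _ _ v h1 h2
      rcases hq with rfl | rfl
      · exact absurd (Sym2.eq_swap) hne
      · exact ⟨j, Or.inr rfl, Or.inl rfl, rfl⟩
    · obtain ⟨rfl, hq⟩ := key _ _ _ _ _ _ v h1 h2
      rcases hq with rfl | rfl
      · exact absurd rfl hne
      · exact ⟨j, Or.inr rfl, Or.inr rfl, rfl⟩

end Assemble

section Spiders
variable {α : Type} [DecidableEq α] {C : SimpleGraph α}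

lemma spider3_abs (hconn : C.Preconnected) (t0 t1 t2 : α) :
    ∃ (c : α) (P0 : C.Walk c t0) (P1 : C.Walk c t1) (P2 : C.Walk c t2),
      P0.IsPath ∧ P1.IsPath ∧ P2.IsPath ∧
      (∀ v, v ∈ P0.support → v ∈ P1.support → v = c) ∧
      (∀ v, v ∈ P0.support → v ∈ P2.support → v = c) ∧
      (∀ v, v ∈ P1.support → v ∈ P2.support → v = c) := by
  obtain ⟨w01⟩ := hconn t0 t1
  set p01 := w01.bypass with hp01
  have hp01path : p01.IsPath := w01.bypass_isPath
  obtain ⟨w2⟩ := hconn t2 t1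
  obtain ⟨c, hc, q, hqpath, hqsub, hqfirst⟩ :=
    exists_firstHit w2 {v | v ∈ p01.support} p01.end_mem_support
  refine ⟨c, (p01.takeUntil c hc).reverse, p01.dropUntil c hc, q.reverse,
    (hp01path.takeUntil hc).reverse, hp01path.dropUntil hc, hqpath.reverse, ?_, ?_, ?_⟩
  · intro v hv0 hv1
    rw [Walk.support_reverse, List.mem_reverse] at hv0
    exact take_drop_inter hp01path hc v hv0 hv1
  · intro v hv0 hv2
    rw [Walk.support_reverse, List.mem_reverse] at hv0 hv2
    exact hqfirst v hv2 (p01.support_takeUntil_subset hc hv0)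
  · intro v hv1 hv2
    rw [Walk.support_reverse, List.mem_reverse] at hv2
    exact hqfirst v hv2 (p01.support_dropUntil_subset hc hv1)

/-- abstract double spider -/
def AbsDS (C : SimpleGraph α) (c1 c2 ta tb tc td : α) : Prop :=
  ∃ (R : C.Walk c1 c2) (Qa : C.Walk c1 ta) (Qb : C.Walk c1 tb)
    (Qc : C.Walk c2 tc) (Qd : C.Walk c2 td),
    c1 ≠ c2 ∧ R.IsPath ∧ Qa.IsPath ∧ Qb.IsPath ∧ Qc.IsPath ∧ Qd.IsPath ∧
    (∀ v, v ∈ Qa.support → v ∈ Qb.support → v = c1) ∧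
    (∀ v, v ∈ Qc.support → v ∈ Qd.support → v = c2) ∧
    (∀ v, v ∈ Qa.support → v ∉ Qc.support) ∧
    (∀ v, v ∈ Qa.support → v ∉ Qd.support) ∧
    (∀ v, v ∈ Qb.support → v ∉ Qc.support) ∧
    (∀ v, v ∈ Qb.support → v ∉ Qd.support) ∧
    (∀ v, v ∈ R.support → v ∈ Qa.support → v = c1) ∧
    (∀ v, v ∈ R.support → v ∈ Qb.support → v = c1) ∧
    (∀ v, v ∈ R.support → v ∈ Qc.support → v = c2) ∧
    (∀ v, v ∈ R.support → v ∈ Qd.support → v = c2)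

lemma ds_of {c d t0 t1 t2 t3 : α} (P0 : C.Walk c t0) (P1 : C.Walk c t1) (P2 : C.Walk c t2)
    (h0 : P0.IsPath) (h1 : P1.IsPath) (h2 : P2.IsPath)
    (pw01 : ∀ v, v ∈ P0.support → v ∈ P1.support → v = c)
    (pw02 : ∀ v, v ∈ P0.support → v ∈ P2.support → v = c)
    (pw12 : ∀ v, v ∈ P1.support → v ∈ P2.support → v = c)
    (q : C.Walk t3 d) (hq : q.IsPath) (hd : d ∈ P0.support) (hdc : d ≠ c)
    (hqS : ∀ v ∈ q.support,
      (v ∈ P0.support ∨ v ∈ P1.support ∨ v ∈ P2.support) → v = d) :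
    AbsDS C c d t1 t2 t0 t3 := by
  refine ⟨P0.takeUntil d hd, P1, P2, P0.dropUntil d hd, q.reverse,
    fun h => hdc h.symm, h0.takeUntil hd, h1, h2, h0.dropUntil hd, hq.reverse,
    pw12, ?_, ?_, ?_, ?_, ?_, ?_, ?_, ?_, ?_⟩
  · -- Qc ∩ Qd → d
    intro v hvc hvd
    rw [Walk.support_reverse, List.mem_reverse] at hvd
    exact hqS v hvd (Or.inl (P0.support_dropUntil_subset hd hvc))
  · -- Qa=P1 ∩ Qc=drop : empty
    intro v hva hvc
    have hvc' := P0.support_dropUntil_subset hd hvc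
    have hvcc : v = c := pw01 v hvc' hva
    subst hvcc
    exact hdc (take_drop_inter h0 hd v (P0.takeUntil d hd).start_mem_support hvc).symm
  · -- Qa=P1 ∩ Qd=q.rev : empty
    intro v hva hvd
    rw [Walk.support_reverse, List.mem_reverse] at hvd
    have : v = d := hqS v hvd (Or.inr (Or.inl hva))
    subst this
    exact hdc (pw01 v hd hva)
  · -- Qb=P2 ∩ Qc
    intro v hvb hvc
    have hvc' := P0.support_dropUntil_subset hd hvc
    have hvcc : v = c := pw02 v hvc' hvb
    subst hvcc
    exact hdc (take_drop_inter h0 hd v (P0.takeUntil d hd).start_mem_support hvc).symm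
  · -- Qb=P2 ∩ Qd
    intro v hvb hvd
    rw [Walk.support_reverse, List.mem_reverse] at hvd
    have : v = d := hqS v hvd (Or.inr (Or.inr hvb))
    subst this
    exact hdc (pw02 v hd hvb)
  · -- R ∩ Qa=P1 → c
    intro v hvr hva
    exact pw01 v (P0.support_takeUntil_subset hd hvr) hva
  · -- R ∩ Qb=P2 → c
    intro v hvr hvb
    exact pw02 v (P0.support_takeUntil_subset hd hvr) hvb
  · -- R ∩ Qc=drop → d
    intro v hvr hvc
    exact take_drop_inter h0 hd v hvr hvc
  · -- R ∩ Qd=q.rev → d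
    intro v hvr hvd
    rw [Walk.support_reverse, List.mem_reverse] at hvd
    exact hqS v hvd (Or.inl (P0.support_takeUntil_subset hd hvr))

lemma spider4_abs (hconn : C.Preconnected) (t0 t1 t2 t3 : α) :
    (∃ (c : α) (P0 : C.Walk c t0) (P1 : C.Walk c t1) (P2 : C.Walk c t2) (P3 : C.Walk c t3),
      P0.IsPath ∧ P1.IsPath ∧ P2.IsPath ∧ P3.IsPath ∧
      (∀ v, v ∈ P0.support → v ∈ P1.support → v = c) ∧
      (∀ v, v ∈ P0.support → v ∈ P2.support → v = c) ∧
      (∀ v, v ∈ P0.support → v ∈ P3.support → v = c) ∧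
      (∀ v, v ∈ P1.support → v ∈ P2.support → v = c) ∧
      (∀ v, v ∈ P1.support → v ∈ P3.support → v = c) ∧
      (∀ v, v ∈ P2.support → v ∈ P3.support → v = c)) ∨
    (∃ c1 c2, AbsDS C c1 c2 t1 t2 t0 t3 ∨ AbsDS C c1 c2 t0 t2 t1 t3 ∨
      AbsDS C c1 c2 t0 t1 t2 t3) := by
  obtain ⟨c, P0, P1, P2, h0, h1, h2, pw01, pw02, pw12⟩ := spider3_abs hconn t0 t1 t2
  obtain ⟨w⟩ := hconn t3 t0
  obtain ⟨d, hd, q, hqpath, hqsub, hqfirst⟩ :=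
    exists_firstHit w {v | v ∈ P0.support ∨ v ∈ P1.support ∨ v ∈ P2.support}
      (Or.inl P0.end_mem_support)
  by_cases hdc : d = c
  · subst hdc
    refine Or.inl ⟨d, P0, P1, P2, q.reverse, h0, h1, h2, hqpath.reverse, pw01, pw02, ?_,
      pw12, ?_, ?_⟩
    · intro v hv0 hv3
      rw [Walk.support_reverse, List.mem_reverse] at hv3
      exact hqfirst v hv3 (Or.inl hv0)
    · intro v hv1 hv3
      rw [Walk.support_reverse, List.mem_reverse] at hv3
      exact hqfirst v hv3 (Or.inr (Or.inl hv1))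
    · intro v hv2 hv3
      rw [Walk.support_reverse, List.mem_reverse] at hv3
      exact hqfirst v hv3 (Or.inr (Or.inr hv2))
  · rcases hd with hd0 | hd1 | hd2
    · exact Or.inr ⟨c, d, Or.inl (ds_of P0 P1 P2 h0 h1 h2 pw01 pw02 pw12 q hqpath hd0 hdc
        (fun v hv hS => hqfirst v hv hS))⟩
    · refine Or.inr ⟨c, d, Or.inr (Or.inl (ds_of P1 P0 P2 h1 h0 h2
        (fun v a b_ => pw01 v b_ a) pw12 pw02 q hqpath hd1 hdc ?_))⟩
      intro v hv hS
      apply hqfirst v hv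
      rcases hS with h' | h' | h'
      · exact Or.inr (Or.inl h')
      · exact Or.inl h'
      · exact Or.inr (Or.inr h')
    · refine Or.inr ⟨c, d, Or.inr (Or.inr (ds_of P2 P0 P1 h2 h0 h1
        (fun v a b_ => pw02 v b_ a) (fun v a b_ => pw12 v b_ a) pw01 q hqpath hd2 hdc ?_))⟩
      intro v hv hS
      apply hqfirst v hv
      rcases hS with h' | h' | h'
      · exact Or.inr (Or.inr h')
      · exact Or.inl h'
      · exact Or.inr (Or.inl h')

end Spiders

section RelSpiders
variable {V : Type} {G : SimpleGraph V}

noncomputable local instance : DecidableEq V := Classical.decEq V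

/-- relative 3-spider inside `s` -/
def RelSp3 (G : SimpleGraph V) (s : Set V) (c t0 t1 t2 : V) : Prop :=
  ∃ (P0 : G.Walk c t0) (P1 : G.Walk c t1) (P2 : G.Walk c t2),
    P0.IsPath ∧ P1.IsPath ∧ P2.IsPath ∧
    (∀ v ∈ P0.support, v ∈ s) ∧ (∀ v ∈ P1.support, v ∈ s) ∧ (∀ v ∈ P2.support, v ∈ s) ∧
    (∀ v, v ∈ P0.support → v ∈ P1.support → v = c) ∧
    (∀ v, v ∈ P0.support → v ∈ P2.support → v = c) ∧
    (∀ v, v ∈ P1.support → v ∈ P2.support → v = c)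

/-- relative 4-spider inside `s` -/
def RelSp4 (G : SimpleGraph V) (s : Set V) (c t0 t1 t2 t3 : V) : Prop :=
  ∃ (P0 : G.Walk c t0) (P1 : G.Walk c t1) (P2 : G.Walk c t2) (P3 : G.Walk c t3),
    P0.IsPath ∧ P1.IsPath ∧ P2.IsPath ∧ P3.IsPath ∧
    (∀ v ∈ P0.support, v ∈ s) ∧ (∀ v ∈ P1.support, v ∈ s) ∧
    (∀ v ∈ P2.support, v ∈ s) ∧ (∀ v ∈ P3.support, v ∈ s) ∧
    (∀ v, v ∈ P0.support → v ∈ P1.support → v = c) ∧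
    (∀ v, v ∈ P0.support → v ∈ P2.support → v = c) ∧
    (∀ v, v ∈ P0.support → v ∈ P3.support → v = c) ∧
    (∀ v, v ∈ P1.support → v ∈ P2.support → v = c) ∧
    (∀ v, v ∈ P1.support → v ∈ P3.support → v = c) ∧
    (∀ v, v ∈ P2.support → v ∈ P3.support → v = c)

/-- relative double spider inside `s` -/
def RelDS (G : SimpleGraph V) (s : Set V) (c1 c2 ta tb tc td : V) : Prop :=
  ∃ (R : G.Walk c1 c2) (Qa : G.Walk c1 ta) (Qb : G.Walk c1 tb)
    (Qc : G.Walk c2 tc) (Qd : G.Walk c2 td),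
    c1 ≠ c2 ∧ R.IsPath ∧ Qa.IsPath ∧ Qb.IsPath ∧ Qc.IsPath ∧ Qd.IsPath ∧
    (∀ v ∈ R.support, v ∈ s) ∧ (∀ v ∈ Qa.support, v ∈ s) ∧ (∀ v ∈ Qb.support, v ∈ s) ∧
    (∀ v ∈ Qc.support, v ∈ s) ∧ (∀ v ∈ Qd.support, v ∈ s) ∧
    (∀ v, v ∈ Qa.support → v ∈ Qb.support → v = c1) ∧
    (∀ v, v ∈ Qc.support → v ∈ Qd.support → v = c2) ∧
    (∀ v, v ∈ Qa.support → v ∉ Qc.support) ∧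
    (∀ v, v ∈ Qa.support → v ∉ Qd.support) ∧
    (∀ v, v ∈ Qb.support → v ∉ Qc.support) ∧
    (∀ v, v ∈ Qb.support → v ∉ Qd.support) ∧
    (∀ v, v ∈ R.support → v ∈ Qa.support → v = c1) ∧
    (∀ v, v ∈ R.support → v ∈ Qb.support → v = c1) ∧
    (∀ v, v ∈ R.support → v ∈ Qc.support → v = c2) ∧
    (∀ v, v ∈ R.support → v ∈ Qd.support → v = c2)

variable {s : Set V}

private lemma mapsub {a b : ↥s} (p : (G.induce s).Walk a b) :
    ∀ v ∈ (p.map (SimpleGraph.Embedding.induce s).toHom).support, v ∈ s := by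
  intro v hv
  rw [Walk.support_map, List.mem_map] at hv
  obtain ⟨u, -, rfl⟩ := hv
  exact u.2

private lemma mappair {a b a' b' c' : ↥s} {p : (G.induce s).Walk a b}
    {p' : (G.induce s).Walk a' b'}
    (pw : ∀ u, u ∈ p.support → u ∈ p'.support → u = c') :
    ∀ v, v ∈ (p.map (SimpleGraph.Embedding.induce s).toHom).support →
      v ∈ (p'.map (SimpleGraph.Embedding.induce s).toHom).support → v = (c' : V) := by
  intro v hv hv'
  rw [Walk.support_map, List.mem_map] at hv hv'
  obtain ⟨u, hu, rfl⟩ := hv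
  obtain ⟨u', hu', he⟩ := hv'
  have : u' = u := Subtype.val_injective he
  subst this
  exact congrArg Subtype.val (pw u' hu hu')

private lemma mapdisj {a b a' b' : ↥s} {p : (G.induce s).Walk a b}
    {p' : (G.induce s).Walk a' b'}
    (pw : ∀ u, u ∈ p.support → u ∉ p'.support) :
    ∀ v, v ∈ (p.map (SimpleGraph.Embedding.induce s).toHom).support →
      v ∉ (p'.map (SimpleGraph.Embedding.induce s).toHom).support := by
  intro v hv hv'
  rw [Walk.support_map, List.mem_map] at hv hv'
  obtain ⟨u, hu, rfl⟩ := hv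
  obtain ⟨u', hu', he⟩ := hv'
  have : u' = u := Subtype.val_injective he
  subst this
  exact pw u' hu hu'

private lemma mappath {a b : ↥s} {p : (G.induce s).Walk a b} (hp : p.IsPath) :
    (p.map (SimpleGraph.Embedding.induce s).toHom).IsPath :=
  Walk.map_isPath_of_injective (Subtype.val_injective) hp

lemma relSpider3 (hconn : (G.induce s).Connected) {t0 t1 t2 : V}
    (h0 : t0 ∈ s) (h1 : t1 ∈ s) (h2 : t2 ∈ s) :
    ∃ c ∈ s, RelSp3 G s c t0 t1 t2 := by
  obtain ⟨c, P0, P1, P2, hp0, hp1, hp2, pw01, pw02, pw12⟩ :=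
    spider3_abs hconn.preconnected ⟨t0, h0⟩ ⟨t1, h1⟩ ⟨t2, h2⟩
  refine ⟨c, c.2, P0.map (SimpleGraph.Embedding.induce s).toHom, P1.map (SimpleGraph.Embedding.induce s).toHom, P2.map (SimpleGraph.Embedding.induce s).toHom, mappath hp0, mappath hp1, mappath hp2,
    mapsub _, mapsub _, mapsub _, mappair pw01, mappair pw02, mappair pw12⟩

private lemma mapDS {c1 c2 ta tb tc td : ↥s}
    (h : AbsDS (G.induce s) c1 c2 ta tb tc td) :
    RelDS G s (c1 : V) (c2 : V) (ta : V) (tb : V) (tc : V) (td : V) := by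
  obtain ⟨R, Qa, Qb, Qc, Qd, hne, hR, hQa, hQb, hQc, hQd,
    w1, w2, w3, w4, w5, w6, w7, w8, w9, w10⟩ := h
  exact ⟨R.map (SimpleGraph.Embedding.induce s).toHom, Qa.map (SimpleGraph.Embedding.induce s).toHom, Qb.map (SimpleGraph.Embedding.induce s).toHom, Qc.map (SimpleGraph.Embedding.induce s).toHom, Qd.map (SimpleGraph.Embedding.induce s).toHom,
    fun he => hne (Subtype.val_injective he),
    mappath hR, mappath hQa, mappath hQb, mappath hQc, mappath hQd,
    mapsub _, mapsub _, mapsub _, mapsub _, mapsub _,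
    mappair w1, mappair w2, mapdisj w3, mapdisj w4, mapdisj w5, mapdisj w6,
    mappair w7, mappair w8, mappair w9, mappair w10⟩

lemma relSpider4 (hconn : (G.induce s).Connected) {t0 t1 t2 t3 : V}
    (h0 : t0 ∈ s) (h1 : t1 ∈ s) (h2 : t2 ∈ s) (h3 : t3 ∈ s) :
    (∃ c ∈ s, RelSp4 G s c t0 t1 t2 t3) ∨
    (∃ c1 c2, c1 ∈ s ∧ c2 ∈ s ∧
      (RelDS G s c1 c2 t1 t2 t0 t3 ∨ RelDS G s c1 c2 t0 t2 t1 t3 ∨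
       RelDS G s c1 c2 t0 t1 t2 t3)) := by
  rcases spider4_abs hconn.preconnected ⟨t0, h0⟩ ⟨t1, h1⟩ ⟨t2, h2⟩ ⟨t3, h3⟩ with
    ⟨c, P0, P1, P2, P3, hp0, hp1, hp2, hp3, q01, q02, q03, q12, q13, q23⟩ | ⟨c1, c2, hds⟩
  · exact Or.inl ⟨c, c.2, P0.map (SimpleGraph.Embedding.induce s).toHom, P1.map (SimpleGraph.Embedding.induce s).toHom, P2.map (SimpleGraph.Embedding.induce s).toHom, P3.map (SimpleGraph.Embedding.induce s).toHom,
      mappath hp0, mappath hp1, mappath hp2, mappath hp3,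
      mapsub _, mapsub _, mapsub _, mapsub _,
      mappair q01, mappair q02, mappair q03, mappair q12, mappair q13, mappair q23⟩
  · refine Or.inr ⟨c1, c2, c1.2, c2.2, ?_⟩
    rcases hds with h' | h' | h'
    · exact Or.inl (mapDS h')
    · exact Or.inr (Or.inl (mapDS h'))
    · exact Or.inr (Or.inr (mapDS h'))

end RelSpiders

section K5
variable {V : Type} [Fintype V] {G : SimpleGraph V}

lemma assembleK5 (f : Fin 5 → Set V) (hfdisj : Pairwise fun a b => Disjoint (f a) (f b))
    (c : Fin 5 → V) (hc : ∀ i, c i ∈ f i)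
    (xx : Fin 5 → Fin 5 → V)
    (hxadj : ∀ a b, a ≠ b → G.Adj (xx a b) (xx b a))
    (A : ∀ i j, i ≠ j → G.Walk (c i) (xx i j))
    (hApath : ∀ i j h, (A i j h).IsPath)
    (hAsub : ∀ i j (h : i ≠ j), ∀ v ∈ (A i j h).support, v ∈ f i)
    (hAdisj : ∀ i j j' (h : i ≠ j) (h' : i ≠ j'), j ≠ j' →
        ∀ v, v ∈ (A i j h).support → v ∈ (A i j' h').support → v = c i) :
    IsTopologicalMinor (⊤ : SimpleGraph (Fin 5)) G := by
  exact assemble (⊤ : SimpleGraph (Fin 5)) f (fun p q hne => hfdisj hne) c hc xx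
    (fun p q h => hxadj p q h)
    (fun p q h => A p q h) (fun p q h => hApath p q h)
    (fun p q h => hAsub p q h) (fun p q q' h h' hne => hAdisj p q q' h h' hne)

end K5

section K33
variable {V : Type} [Fintype V] {G : SimpleGraph V}

lemma noLL (a b : Fin 3) :
    ¬ (completeBipartiteGraph (Fin 3) (Fin 3)).Adj (Sum.inl a) (Sum.inl b) := by simp

lemma noRR (a b : Fin 3) :
    ¬ (completeBipartiteGraph (Fin 3) (Fin 3)).Adj (Sum.inr a) (Sum.inr b) := by simp

lemma noF3 {n : ℕ} (h : n + 3 < 3) : False := by omega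

lemma assembleK33 (f : Fin 5 → Set V) (hfdisj : Pairwise fun a b => Disjoint (f a) (f b))
    (i j1 j2 j3 j4 : Fin 5)
    (hd1 : j1 ≠ i) (hd2 : j2 ≠ i) (hd3 : j3 ≠ i) (hd4 : j4 ≠ i)
    (hd12 : j1 ≠ j2) (hd13 : j1 ≠ j3) (hd14 : j1 ≠ j4)
    (hd23 : j2 ≠ j3) (hd24 : j2 ≠ j4) (hd34 : j3 ≠ j4)
    (xx : Fin 5 → Fin 5 → V)
    (hxadj : ∀ a b, a ≠ b → G.Adj (xx a b) (xx b a))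
    (c1 c2 : V)
    (hDS : RelDS G (f i) c1 c2 (xx i j1) (xx i j2) (xx i j3) (xx i j4))
    (s1 s2 s3 s4 : V)
    (hS1 : RelSp3 G (f j1) s1 (xx j1 i) (xx j1 j3) (xx j1 j4))
    (hS2 : RelSp3 G (f j2) s2 (xx j2 i) (xx j2 j3) (xx j2 j4))
    (hS3 : RelSp3 G (f j3) s3 (xx j3 i) (xx j3 j1) (xx j3 j2))
    (hS4 : RelSp3 G (f j4) s4 (xx j4 i) (xx j4 j1) (xx j4 j2)) :
    IsTopologicalMinor (completeBipartiteGraph (Fin 3) (Fin 3)) G := by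
  classical
  -- symmetric distinctness
  have hd1' := hd1.symm; have hd2' := hd2.symm; have hd3' := hd3.symm; have hd4' := hd4.symm
  have hd12' := hd12.symm; have hd13' := hd13.symm; have hd14' := hd14.symm
  have hd23' := hd23.symm; have hd24' := hd24.symm; have hd34' := hd34.symm
  obtain ⟨R, Qa, Qb, Qc, Qd, hc12, hRp, hQap, hQbp, hQcp, hQdp,
    hRs, hQas, hQbs, hQcs, hQds, w1, w2, w3, w4, w5, w6, w7, w8, w9, w10⟩ := hDS
  obtain ⟨L1i, L13, L14, p1i, p13, p14, m1i, m13, m14, q1a, q1b, q1c⟩ := hS1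
  obtain ⟨L2i, L23, L24, p2i, p23, p24, m2i, m23, m24, q2a, q2b, q2c⟩ := hS2
  obtain ⟨L3i, L31, L32, p3i, p31, p32, m3i, m31, m32, q3a, q3b, q3c⟩ := hS3
  obtain ⟨L4i, L41, L42, p4i, p41, p42, m4i, m41, m42, q4a, q4b, q4c⟩ := hS4
  -- split off the first edge of R
  have hRnn : ¬ R.Nil := by
    rw [Walk.not_nil_iff_lt_length]
    rcases Nat.eq_zero_or_pos R.length with h | h
    · exact absurd (Walk.eq_of_length_eq_zero h) hc12
    · exact h
  obtain ⟨w0, eadj, R2, hRcons⟩ := Walk.not_nil_iff.mp hRnn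
  have hR2sub : ∀ v ∈ R2.support, v ∈ R.support := by
    intro v hv
    rw [hRcons, Walk.support_cons]
    exact List.mem_cons_of_mem _ hv
  have hc1nR2 : c1 ∉ R2.support := by
    have := hRp.support_nodup
    rw [hRcons, Walk.support_cons] at this
    exact (List.nodup_cons.mp this).1
  have hR2p : R2.IsPath := by
    have := hRp; rw [hRcons] at this; exact this.of_cons
  have hc2R2 : c2 ∈ R2.support := R2.end_mem_support
  have hR2rev : ∀ v, v ∈ R2.reverse.support → v ∈ R.support := by
    intro v hv
    rw [Walk.support_reverse, List.mem_reverse] at hv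
    exact hR2sub v hv
  have hc1fi : c1 ∈ f i := hQas c1 Qa.start_mem_support
  have hc1R : c1 ∈ R.support := R.start_mem_support
  -- blob helpers
  have hcl0 : ∀ v, (v ∈ Qa.support ∨ v ∈ Qb.support ∨ v = c1) → v ∈ f i := by
    rintro v (h | h | rfl)
    · exact hQas v h
    · exact hQbs v h
    · exact hc1fi
  have hcr0 : ∀ v, (v ∈ Qc.support ∨ v ∈ Qd.support ∨ v ∈ R2.support) → v ∈ f i := by
    rintro v (h | h | h)
    · exact hQcs v h
    · exact hQds v h
    · exact hRs v (hR2sub v h)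
  have hlr : ∀ v, (v ∈ Qa.support ∨ v ∈ Qb.support ∨ v = c1) →
      (v ∈ Qc.support ∨ v ∈ Qd.support ∨ v ∈ R2.support) → False := by
    rintro v (h | h | rfl) (h' | h' | h')
    · exact w3 v h h'
    · exact w4 v h h'
    · exact hc1nR2 ((w7 v (hR2sub v h') h) ▸ h')
    · exact w5 v h h'
    · exact w6 v h h'
    · exact hc1nR2 ((w8 v (hR2sub v h') h) ▸ h')
    · exact hc12 (w9 v hc1R h')
    · exact hc12 (w10 v hc1R h')
    · exact hc1nR2 h'
  have D : ∀ (a b : Fin 5), a ≠ b → ∀ v, v ∈ f a → v ∈ f b → False :=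
    fun a b hab v hv hv' => Set.disjoint_left.mp (hfdisj hab) hv hv'
  refine assemble (completeBipartiteGraph (Fin 3) (Fin 3))
    (fun p => match p with
      | Sum.inl ⟨0, _⟩ => {v | v ∈ Qa.support ∨ v ∈ Qb.support ∨ v = c1}
      | Sum.inl ⟨1, _⟩ => f j3
      | Sum.inl ⟨2, _⟩ => f j4
      | Sum.inr ⟨0, _⟩ => {v | v ∈ Qc.support ∨ v ∈ Qd.support ∨ v ∈ R2.support}
      | Sum.inr ⟨1, _⟩ => f j1
      | Sum.inr ⟨2, _⟩ => f j2
      | _ => (∅ : Set V))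
    ?_
    (fun p => match p with
      | Sum.inl ⟨0, _⟩ => c1
      | Sum.inl ⟨1, _⟩ => s3
      | Sum.inl ⟨2, _⟩ => s4
      | Sum.inr ⟨0, _⟩ => c2
      | Sum.inr ⟨1, _⟩ => s1
      | Sum.inr ⟨2, _⟩ => s2
      | _ => c1)
    ?_
    (fun p q => match p, q with
      | Sum.inl ⟨0, _⟩, Sum.inr ⟨0, _⟩ => c1
      | Sum.inl ⟨0, _⟩, Sum.inr ⟨1, _⟩ => xx i j1
      | Sum.inl ⟨0, _⟩, Sum.inr ⟨2, _⟩ => xx i j2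
      | Sum.inl ⟨1, _⟩, Sum.inr ⟨0, _⟩ => xx j3 i
      | Sum.inl ⟨1, _⟩, Sum.inr ⟨1, _⟩ => xx j3 j1
      | Sum.inl ⟨1, _⟩, Sum.inr ⟨2, _⟩ => xx j3 j2
      | Sum.inl ⟨2, _⟩, Sum.inr ⟨0, _⟩ => xx j4 i
      | Sum.inl ⟨2, _⟩, Sum.inr ⟨1, _⟩ => xx j4 j1
      | Sum.inl ⟨2, _⟩, Sum.inr ⟨2, _⟩ => xx j4 j2
      | Sum.inr ⟨0, _⟩, Sum.inl ⟨0, _⟩ => w0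
      | Sum.inr ⟨0, _⟩, Sum.inl ⟨1, _⟩ => xx i j3
      | Sum.inr ⟨0, _⟩, Sum.inl ⟨2, _⟩ => xx i j4
      | Sum.inr ⟨1, _⟩, Sum.inl ⟨0, _⟩ => xx j1 i
      | Sum.inr ⟨1, _⟩, Sum.inl ⟨1, _⟩ => xx j1 j3
      | Sum.inr ⟨1, _⟩, Sum.inl ⟨2, _⟩ => xx j1 j4
      | Sum.inr ⟨2, _⟩, Sum.inl ⟨0, _⟩ => xx j2 i
      | Sum.inr ⟨2, _⟩, Sum.inl ⟨1, _⟩ => xx j2 j3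
      | Sum.inr ⟨2, _⟩, Sum.inl ⟨2, _⟩ => xx j2 j4
      | _, _ => c1)
    ?_
    (fun p q => match p, q with
      | Sum.inl ⟨0, _⟩, Sum.inr ⟨0, _⟩ => fun _ => Walk.nil
      | Sum.inl ⟨0, _⟩, Sum.inr ⟨1, _⟩ => fun _ => Qa
      | Sum.inl ⟨0, _⟩, Sum.inr ⟨2, _⟩ => fun _ => Qb
      | Sum.inl ⟨1, _⟩, Sum.inr ⟨0, _⟩ => fun _ => L3i
      | Sum.inl ⟨1, _⟩, Sum.inr ⟨1, _⟩ => fun _ => L31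
      | Sum.inl ⟨1, _⟩, Sum.inr ⟨2, _⟩ => fun _ => L32
      | Sum.inl ⟨2, _⟩, Sum.inr ⟨0, _⟩ => fun _ => L4i
      | Sum.inl ⟨2, _⟩, Sum.inr ⟨1, _⟩ => fun _ => L41
      | Sum.inl ⟨2, _⟩, Sum.inr ⟨2, _⟩ => fun _ => L42
      | Sum.inr ⟨0, _⟩, Sum.inl ⟨0, _⟩ => fun _ => R2.reverse
      | Sum.inr ⟨0, _⟩, Sum.inl ⟨1, _⟩ => fun _ => Qc
      | Sum.inr ⟨0, _⟩, Sum.inl ⟨2, _⟩ => fun _ => Qd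
      | Sum.inr ⟨1, _⟩, Sum.inl ⟨0, _⟩ => fun _ => L1i
      | Sum.inr ⟨1, _⟩, Sum.inl ⟨1, _⟩ => fun _ => L13
      | Sum.inr ⟨1, _⟩, Sum.inl ⟨2, _⟩ => fun _ => L14
      | Sum.inr ⟨2, _⟩, Sum.inl ⟨0, _⟩ => fun _ => L2i
      | Sum.inr ⟨2, _⟩, Sum.inl ⟨1, _⟩ => fun _ => L23
      | Sum.inr ⟨2, _⟩, Sum.inl ⟨2, _⟩ => fun _ => L24
      | Sum.inl _, Sum.inl _ => fun h => absurd h (noLL _ _)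
      | Sum.inr _, Sum.inr _ => fun h => absurd h (noRR _ _)
      | Sum.inl ⟨_+3, ha⟩, Sum.inr _ => fun _ => (noF3 ha).elim
      | Sum.inl _, Sum.inr ⟨_+3, hb⟩ => fun _ => (noF3 hb).elim
      | Sum.inr ⟨_+3, ha⟩, Sum.inl _ => fun _ => (noF3 ha).elim
      | Sum.inr _, Sum.inl ⟨_+3, hb⟩ => fun _ => (noF3 hb).elim)
    ?_ ?_ ?_
  · -- cells pairwise disjoint
    intro p q hne
    rcases p with a | a <;> rcases q with b | b <;> fin_cases a <;> fin_cases b <;>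
      first
        | exact absurd rfl hne
        | exact Set.disjoint_left.mpr (fun {v} hv hv' => absurd (hlr v hv hv') id)
        | exact Set.disjoint_left.mpr (fun {v} hv hv' => absurd (hlr v hv' hv) id)
        | exact Set.disjoint_left.mpr
            (fun {v} hv hv' => absurd (D _ _ (by assumption) v (hcl0 v hv) hv') id)
        | exact Set.disjoint_left.mpr
            (fun {v} hv hv' => absurd (D _ _ (by assumption) v hv (hcl0 v hv')) id)
        | exact Set.disjoint_left.mpr
            (fun {v} hv hv' => absurd (D _ _ (by assumption) v (hcr0 v hv) hv') id)
        | exact Set.disjoint_left.mpr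
            (fun {v} hv hv' => absurd (D _ _ (by assumption) v hv (hcr0 v hv')) id)
        | exact Set.disjoint_left.mpr
            (fun {v} hv hv' => absurd (D _ _ (by assumption) v hv hv') id)
  · -- centers in cells
    intro p
    rcases p with a | a <;> fin_cases a
    · exact Or.inr (Or.inr rfl)
    · exact m3i s3 L3i.start_mem_support
    · exact m4i s4 L4i.start_mem_support
    · exact Or.inr (Or.inr hc2R2)
    · exact m1i s1 L1i.start_mem_support
    · exact m2i s2 L2i.start_mem_support
  · -- edges between attachments
    intro p q h
    rcases p with a | a <;> rcases q with b | b <;> fin_cases a <;> fin_cases b <;>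
      first
        | exact absurd h (noLL _ _)
        | exact absurd h (noRR _ _)
        | exact eadj
        | exact eadj.symm
        | exact hxadj _ _ (by assumption)
        | exact (hxadj _ _ (by assumption)).symm
  · -- paths
    intro p q h
    rcases p with a | a <;> rcases q with b | b <;> fin_cases a <;> fin_cases b <;>
      first
        | exact absurd h (noLL _ _)
        | exact absurd h (noRR _ _)
        | exact Walk.IsPath.nil
        | exact hQap
        | exact hQbp
        | exact hQcp
        | exact hQdp
        | exact hR2p.reverse
        | exact p1i | exact p13 | exact p14
        | exact p2i | exact p23 | exact p24
        | exact p3i | exact p31 | exact p32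
        | exact p4i | exact p41 | exact p42
  · -- supports inside cells
    intro p q h v hv
    rcases p with a | a <;> rcases q with b | b <;> fin_cases a <;> fin_cases b <;>
      first
        | exact absurd h (noLL _ _)
        | exact absurd h (noRR _ _)
        | exact Or.inl hv
        | exact Or.inr (Or.inl hv)
        | exact Or.inr (Or.inr (by
            simpa using (show v ∈ (Walk.nil : G.Walk c1 c1).support from hv)))
        | exact Or.inr (Or.inr (by
            have hv' : v ∈ R2.reverse.support := hv
            rwa [Walk.support_reverse, List.mem_reverse] at hv'))
        | exact m1i v hv | exact m13 v hv | exact m14 v hv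
        | exact m2i v hv | exact m23 v hv | exact m24 v hv
        | exact m3i v hv | exact m31 v hv | exact m32 v hv
        | exact m4i v hv | exact m41 v hv | exact m42 v hv
  · -- legs of the same cell meet only at the center
    intro p q q' h h' hne v hv hv'
    rcases p with a | a <;> rcases q with b | b <;> rcases q' with b' | b' <;>
      fin_cases a <;> fin_cases b <;> fin_cases b' <;>
      first
        | exact absurd h (noLL _ _)
        | exact absurd h (noRR _ _)
        | exact absurd h' (noLL _ _)
        | exact absurd h' (noRR _ _)
        | exact absurd rfl hne
        | exact List.mem_singleton.mp (show v ∈ (Walk.nil : G.Walk c1 c1).support from hv)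
        | exact List.mem_singleton.mp (show v ∈ (Walk.nil : G.Walk c1 c1).support from hv')
        | exact w1 v hv hv' | exact w1 v hv' hv
        | exact w2 v hv hv' | exact w2 v hv' hv
        | exact w9 v (hR2rev v hv) hv' | exact w9 v (hR2rev v hv') hv
        | exact w10 v (hR2rev v hv) hv' | exact w10 v (hR2rev v hv') hv
        | exact q1a v hv hv' | exact q1a v hv' hv
        | exact q1b v hv hv' | exact q1b v hv' hv
        | exact q1c v hv hv' | exact q1c v hv' hv
        | exact q2a v hv hv' | exact q2a v hv' hv
        | exact q2b v hv hv' | exact q2b v hv' hv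
        | exact q2c v hv hv' | exact q2c v hv' hv
        | exact q3a v hv hv' | exact q3a v hv' hv
        | exact q3b v hv hv' | exact q3b v hv' hv
        | exact q3c v hv hv' | exact q3c v hv' hv
        | exact q4a v hv hv' | exact q4a v hv' hv
        | exact q4b v hv hv' | exact q4b v hv' hv
        | exact q4c v hv hv' | exact q4c v hv' hv

end K33

section Final
variable {V : Type} [Fintype V] [Nonempty V] {G : SimpleGraph V}

lemma finishK33 (f : Fin 5 → Set V) (hfdisj : Pairwise fun a b => Disjoint (f a) (f b))
    (hconn : ∀ k, (G.induce (f k)).Connected)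
    (xx : Fin 5 → Fin 5 → V)
    (hxmem : ∀ a b, a ≠ b → xx a b ∈ f a)
    (hxadj : ∀ a b, a ≠ b → G.Adj (xx a b) (xx b a))
    (i j1 j2 j3 j4 : Fin 5)
    (hd1 : j1 ≠ i) (hd2 : j2 ≠ i) (hd3 : j3 ≠ i) (hd4 : j4 ≠ i)
    (hd12 : j1 ≠ j2) (hd13 : j1 ≠ j3) (hd14 : j1 ≠ j4)
    (hd23 : j2 ≠ j3) (hd24 : j2 ≠ j4) (hd34 : j3 ≠ j4)
    (c1 c2 : V)
    (hDS : RelDS G (f i) c1 c2 (xx i j1) (xx i j2) (xx i j3) (xx i j4)) :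
    IsTopologicalMinor (completeBipartiteGraph (Fin 3) (Fin 3)) G := by
  obtain ⟨s1, hs1, hS1⟩ := relSpider3 (hconn j1) (hxmem j1 i hd1)
    (hxmem j1 j3 hd13) (hxmem j1 j4 hd14)
  obtain ⟨s2, hs2, hS2⟩ := relSpider3 (hconn j2) (hxmem j2 i hd2)
    (hxmem j2 j3 hd23) (hxmem j2 j4 hd24)
  obtain ⟨s3, hs3, hS3⟩ := relSpider3 (hconn j3) (hxmem j3 i hd3)
    (hxmem j3 j1 hd13.symm) (hxmem j3 j2 hd23.symm)
  obtain ⟨s4, hs4, hS4⟩ := relSpider3 (hconn j4) (hxmem j4 i hd4)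
    (hxmem j4 j1 hd14.symm) (hxmem j4 j2 hd24.symm)
  exact assembleK33 f hfdisj i j1 j2 j3 j4 hd1 hd2 hd3 hd4 hd12 hd13 hd14 hd23 hd24 hd34
    xx hxadj c1 c2 hDS s1 s2 s3 s4 hS1 hS2 hS3 hS4

theorem final_main (G : SimpleGraph V)
    (h : ∃ f : Fin 5 → Set V,
      (∀ i, (f i).Nonempty) ∧
      (Pairwise fun i j => Disjoint (f i) (f j)) ∧
      (∀ i, (G.induce (f i)).Connected) ∧
      (∀ i j : Fin 5, i ≠ j → ∃ u ∈ f i, ∃ v ∈ f j, G.Adj u v)) :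
    IsTopologicalMinor (completeBipartiteGraph (Fin 3) (Fin 3)) G ∨
    IsTopologicalMinor (⊤ : SimpleGraph (Fin 5)) G := by
  classical
  obtain ⟨f, hne, hfdisj, hconn, hedges⟩ := h
  -- choose one edge per pair
  have hch : ∀ p : Fin 5 × Fin 5, ∃ uv : V × V,
      p.1 ≠ p.2 → uv.1 ∈ f p.1 ∧ uv.2 ∈ f p.2 ∧ G.Adj uv.1 uv.2 := by
    intro p
    by_cases hp : p.1 ≠ p.2
    · obtain ⟨u, hu, v, hv, huv⟩ := hedges p.1 p.2 hp
      exact ⟨(u, v), fun _ => ⟨hu, hv, huv⟩⟩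
    · exact ⟨(Classical.arbitrary V, Classical.arbitrary V), fun h' => absurd h' hp⟩
  choose F hF using hch
  set xx : Fin 5 → Fin 5 → V := fun a b => if a < b then (F (a, b)).1 else (F (b, a)).2
    with hxx
  have hxmem : ∀ a b, a ≠ b → xx a b ∈ f a := by
    intro a b hab
    rcases lt_or_gt_of_ne hab with hlt | hgt
    · rw [hxx]
      simp only [if_pos hlt]
      exact (hF (a, b) hab).1
    · rw [hxx]
      simp only [if_neg (not_lt_of_gt hgt)]
      exact (hF (b, a) hgt.ne).2.1
  have hxadj : ∀ a b, a ≠ b → G.Adj (xx a b) (xx b a) := by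
    intro a b hab
    rcases lt_or_gt_of_ne hab with hlt | hgt
    · rw [hxx]
      simp only [if_pos hlt, if_neg (not_lt_of_gt hlt)]
      exact (hF (a, b) hab).2.2
    · rw [hxx]
      simp only [if_neg (not_lt_of_gt hgt), if_pos hgt]
      exact ((hF (b, a) hgt.ne).2.2).symm
  clear hF hxx
  -- offset facts
  have off1 : ∀ a : Fin 5, a + 1 ≠ a := by decide
  have off2 : ∀ a : Fin 5, a + 2 ≠ a := by decide
  have off3 : ∀ a : Fin 5, a + 3 ≠ a := by decide
  have off4 : ∀ a : Fin 5, a + 4 ≠ a := by decide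
  have o12 : ∀ a : Fin 5, a + 1 ≠ a + 2 := by decide
  have o13 : ∀ a : Fin 5, a + 1 ≠ a + 3 := by decide
  have o14 : ∀ a : Fin 5, a + 1 ≠ a + 4 := by decide
  have o23 : ∀ a : Fin 5, a + 2 ≠ a + 3 := by decide
  have o24 : ∀ a : Fin 5, a + 2 ≠ a + 4 := by decide
  have o34 : ∀ a : Fin 5, a + 3 ≠ a + 4 := by decide
  have dec5 : ∀ i j : Fin 5, j ≠ i → j = i + 1 ∨ j = i + 2 ∨ j = i + 3 ∨ j = i + 4 := by
    decide
  by_cases hall : ∀ i : Fin 5, ∃ c ∈ f i,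
      RelSp4 G (f i) c (xx i (i+1)) (xx i (i+2)) (xx i (i+3)) (xx i (i+4))
  · -- K5 case
    choose c hcmem hsp using hall
    simp only [RelSp4] at hsp
    choose P0 P1 P2 P3 h0p h1p h2p h3p h0s h1s h2s h3s g01 g02 g03 g12 g13 g23 using hsp
    set A : ∀ i j : Fin 5, i ≠ j → G.Walk (c i) (xx i j) := fun i j hij =>
      if h1 : j = i + 1 then (P0 i).copy rfl (congrArg (xx i) h1.symm)
      else if h2 : j = i + 2 then (P1 i).copy rfl (congrArg (xx i) h2.symm)
      else if h3 : j = i + 3 then (P2 i).copy rfl (congrArg (xx i) h3.symm)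
      else (P3 i).copy rfl (congrArg (xx i)
        ((((dec5 i j (Ne.symm hij)).resolve_left h1).resolve_left h2).resolve_left h3).symm)
      with hA
    have hA1 : ∀ i (hij : i ≠ i + 1), A i (i+1) hij = P0 i := by
      intro i hij
      simp [hA]
    have hA2 : ∀ i (hij : i ≠ i + 2), A i (i+2) hij = P1 i := by
      intro i hij
      simp [hA, Ne.symm (o12 i)]
    have hA3 : ∀ i (hij : i ≠ i + 3), A i (i+3) hij = P2 i := by
      intro i hij
      simp [hA, Ne.symm (o13 i), Ne.symm (o23 i)]
    have hA4 : ∀ i (hij : i ≠ i + 4), A i (i+4) hij = P3 i := by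
      intro i hij
      simp [hA, Ne.symm (o14 i), Ne.symm (o24 i), Ne.symm (o34 i)]
    refine Or.inr (assembleK5 f hfdisj c hcmem xx hxadj A ?_ ?_ ?_)
    · intro i j hij
      rcases dec5 i j (Ne.symm hij) with rfl | rfl | rfl | rfl
      · rw [hA1 i hij]; exact h0p i
      · rw [hA2 i hij]; exact h1p i
      · rw [hA3 i hij]; exact h2p i
      · rw [hA4 i hij]; exact h3p i
    · intro i j hij v hv
      rcases dec5 i j (Ne.symm hij) with rfl | rfl | rfl | rfl
      · rw [hA1 i hij] at hv; exact h0s i v hv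
      · rw [hA2 i hij] at hv; exact h1s i v hv
      · rw [hA3 i hij] at hv; exact h2s i v hv
      · rw [hA4 i hij] at hv; exact h3s i v hv
    · have hAdesc : ∀ i j (hij : i ≠ j) v, v ∈ (A i j hij).support →
          (j = i + 1 ∧ v ∈ (P0 i).support) ∨ (j = i + 2 ∧ v ∈ (P1 i).support) ∨
          (j = i + 3 ∧ v ∈ (P2 i).support) ∨ (j = i + 4 ∧ v ∈ (P3 i).support) := by
        intro i j hij v hv
        rcases dec5 i j (Ne.symm hij) with rfl | rfl | rfl | rfl
        · exact Or.inl ⟨rfl, by rwa [hA1 i hij] at hv⟩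
        · exact Or.inr (Or.inl ⟨rfl, by rwa [hA2 i hij] at hv⟩)
        · exact Or.inr (Or.inr (Or.inl ⟨rfl, by rwa [hA3 i hij] at hv⟩))
        · exact Or.inr (Or.inr (Or.inr ⟨rfl, by rwa [hA4 i hij] at hv⟩))
      intro i j j' hij hij' hne v hv hv'
      rcases hAdesc i j hij v hv with ⟨e1, hm⟩ | ⟨e1, hm⟩ | ⟨e1, hm⟩ | ⟨e1, hm⟩ <;>
        rcases hAdesc i j' hij' v hv' with ⟨e2, hm'⟩ | ⟨e2, hm'⟩ | ⟨e2, hm'⟩ | ⟨e2, hm'⟩ <;>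
        first
          | exact absurd (e1.trans e2.symm) hne
          | exact g01 i v hm hm' | exact g01 i v hm' hm
          | exact g02 i v hm hm' | exact g02 i v hm' hm
          | exact g03 i v hm hm' | exact g03 i v hm' hm
          | exact g12 i v hm hm' | exact g12 i v hm' hm
          | exact g13 i v hm hm' | exact g13 i v hm' hm
          | exact g23 i v hm hm' | exact g23 i v hm' hm
  · -- K3,3 case
    push_neg at hall
    obtain ⟨i0, hno⟩ := hall
    rcases relSpider4 (hconn i0) (hxmem i0 (i0+1) (Ne.symm (off1 i0)))
        (hxmem i0 (i0+2) (Ne.symm (off2 i0))) (hxmem i0 (i0+3) (Ne.symm (off3 i0)))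
        (hxmem i0 (i0+4) (Ne.symm (off4 i0))) with
      ⟨cc, hccmem, hsp⟩ | ⟨c1, c2, hc1, hc2, hcase⟩
    · exact absurd hsp (hno cc hccmem)
    · refine Or.inl ?_
      rcases hcase with hDS | hDS | hDS
      · exact finishK33 f hfdisj hconn xx hxmem hxadj i0 (i0+2) (i0+3) (i0+1) (i0+4)
          (off2 i0) (off3 i0) (off1 i0) (off4 i0)
          (o23 i0) (Ne.symm (o12 i0)) (o24 i0) (Ne.symm (o13 i0)) (o34 i0) (o14 i0) c1 c2 hDS
      · exact finishK33 f hfdisj hconn xx hxmem hxadj i0 (i0+1) (i0+3) (i0+2) (i0+4)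
          (off1 i0) (off3 i0) (off2 i0) (off4 i0)
          (o13 i0) (o12 i0) (o14 i0) (Ne.symm (o23 i0)) (o34 i0) (o24 i0) c1 c2 hDS
      · exact finishK33 f hfdisj hconn xx hxmem hxadj i0 (i0+1) (i0+2) (i0+3) (i0+4)
          (off1 i0) (off2 i0) (off3 i0) (off4 i0)
          (o12 i0) (o13 i0) (o14 i0) (o23 i0) (o24 i0) (o34 i0) c1 c2 hDS

end Final

/-- If `K₅` is a minor of `G`, then `G` contains a subdivision of `K₃,₃` or a subdivision of
`K₅` as a subgraph. -/
theorem topMinor_k33_or_k5_of_k5_minor {V : Type} [Fintype V] [Nonempty V]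
    (G : SimpleGraph V) (h : IsMinor (⊤ : SimpleGraph (Fin 5)) G) :
    IsTopologicalMinor (completeBipartiteGraph (Fin 3) (Fin 3)) G ∨
    IsTopologicalMinor (⊤ : SimpleGraph (Fin 5)) G := by
  obtain ⟨f, h1, h2, h3, h4⟩ := h
  exact final_main G ⟨f, h1, h2, h3, fun i j hij => h4 i j (by simpa using hij)⟩
end

section
/- If G is a k-connected graph, x is a vertex of G, and U ⊆ V(G) \ {x} has size at least k, then there exists an x,U-fan of size k in G. -/
open SimpleGraph

open SimpleGraph.Walk

section MengerMachinery

variable {V : Type}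

attribute [local instance] Classical.decEq

/-- `S` meets every `A`–`B` walk. -/
def MSep (G : SimpleGraph V) (A B S : Set V) : Prop :=
  ∀ ⦃a b : V⦄, a ∈ A → b ∈ B → ∀ p : G.Walk a b, ∃ s ∈ S, s ∈ p.support

/-- There are `k` pairwise disjoint `A`–`B` paths. -/
def MFam (G : SimpleGraph V) (A B : Set V) (k : ℕ) : Prop :=
  ∃ (f g : Fin k → V) (P : ∀ i, G.Walk (f i) (g i)),
    (∀ i, f i ∈ A) ∧ (∀ i, g i ∈ B) ∧ (∀ i, (P i).IsPath) ∧
      ∀ i j, i ≠ j → ∀ w, w ∈ (P i).support → w ∉ (P j).support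

lemma MFam.ofWalks {G : SimpleGraph V} {A B : Set V} {k : ℕ}
    (f g : Fin k → V) (P : ∀ i, G.Walk (f i) (g i))
    (hf : ∀ i, f i ∈ A) (hg : ∀ i, g i ∈ B)
    (hd : ∀ i j, i ≠ j → ∀ w, w ∈ (P i).support → w ∉ (P j).support) :
    MFam G A B k := by
  refine ⟨f, g, fun i => ((P i).toPath : G.Path _ _).1, hf, hg, fun i => ((P i).toPath).2, ?_⟩
  intro i j hij w hwi hwj
  exact hd i j hij w ((P i).support_toPath_subset hwi) ((P j).support_toPath_subset hwj)

lemma MFam.le {G G' : SimpleGraph V} (hle : G ≤ G') {A B : Set V} {k : ℕ}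
    (h : MFam G A B k) : MFam G' A B k := by
  obtain ⟨f, g, P, hf, hg, hp, hd⟩ := h
  have he : ∀ i, ∀ e ∈ (P i).edges, e ∈ G'.edgeSet := by
    intro i e he
    exact edgeSet_mono hle ((P i).edges_subset_edgeSet he)
  refine ⟨f, g, fun i => (P i).transfer G' (he i), hf, hg, ?_, ?_⟩
  · intro i; rw [Walk.isPath_def, Walk.support_transfer]; exact (hp i).support_nodup
  · intro i j hij w hwi hwj
    rw [Walk.support_transfer] at hwi hwj
    exact hd i j hij w hwi hwj

lemma MFam.rev {G : SimpleGraph V} {A B : Set V} {k : ℕ} (h : MFam G A B k) :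
    MFam G B A k := by
  obtain ⟨f, g, P, hf, hg, hp, hd⟩ := h
  refine ⟨g, f, fun i => (P i).reverse, hg, hf, fun i => (hp i).reverse, ?_⟩
  intro i j hij w hwi hwj
  rw [Walk.support_reverse, List.mem_reverse] at hwi hwj
  exact hd i j hij w hwi hwj

/-- Prefix of a walk up to the first vertex in `X`. -/
lemma exists_prefix {G : SimpleGraph V} (X : Set V) :
    ∀ {a b : V} (p : G.Walk a b), (∃ s ∈ X, s ∈ p.support) →
    ∃ (w : V) (q : G.Walk a w), w ∈ X ∧ (∀ z ∈ q.support, z ∈ p.support) ∧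
      (∀ z ∈ q.support, z ∈ X → z = w) ∧ (∀ e ∈ q.edges, e ∈ p.edges) := by
  intro a b p
  induction p with
  | nil =>
    intro h
    obtain ⟨s, hs, hsup⟩ := h
    simp only [support_nil, List.mem_singleton] at hsup
    subst hsup
    exact ⟨s, Walk.nil, hs, by simp, by simp, by simp⟩
  | @cons a c b had p ih =>
    intro h
    by_cases ha : a ∈ X
    · exact ⟨a, Walk.nil, ha, by simp, by simp, by simp⟩
    · obtain ⟨s, hs, hsup⟩ := h
      rw [support_cons, List.mem_cons] at hsup
      have hsup' : s ∈ p.support := by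
        rcases hsup with rfl | hsup'
        · exact absurd hs ha
        · exact hsup'
      obtain ⟨w, q, hw, hsub, hmeet, hedge⟩ := ih ⟨s, hs, hsup'⟩
      refine ⟨w, Walk.cons had q, hw, ?_, ?_, ?_⟩
      · intro z hz
        rw [support_cons, List.mem_cons] at hz ⊢
        rcases hz with rfl | hz
        · exact Or.inl rfl
        · exact Or.inr (hsub z hz)
      · intro z hz hzX
        rw [support_cons, List.mem_cons] at hz
        rcases hz with rfl | hz
        · exact absurd hzX ha
        · exact hmeet z hz hzX
      · intro e he
        rw [edges_cons, List.mem_cons] at he ⊢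
        rcases he with rfl | he
        · exact Or.inl rfl
        · exact Or.inr (hedge e he)

lemma path_start_not_mem_tail {G : SimpleGraph V} {a b : V} {p : G.Walk a b}
    (hp : p.IsPath) : a ∉ p.support.tail := by
  have hnd := hp.support_nodup
  rw [p.support_eq_cons] at hnd
  exact (List.nodup_cons.1 hnd).1

lemma endpoint_not_mem_takeUntil [DecidableEq V] {G : SimpleGraph V} {a b w : V}
    {p : G.Walk a b} (hp : p.IsPath) (hw : w ∈ p.support) (hwb : w ≠ b) :
    b ∉ (p.takeUntil w hw).support := by
  intro hb
  have hspec := p.take_spec hw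
  have hnd : ((p.takeUntil w hw).append (p.dropUntil w hw)).support.Nodup := by
    rw [hspec]; exact hp.support_nodup
  rw [support_append, List.nodup_append] at hnd
  have hb2 : b ∈ (p.dropUntil w hw).support.tail := by
    have := (p.dropUntil w hw).end_mem_support
    rw [(p.dropUntil w hw).support_eq_cons] at this
    rcases List.mem_cons.1 this with h1 | h2
    · exact absurd h1.symm hwb
    · exact h2
  exact hnd.2.2 _ hb _ hb2 rfl

lemma start_not_mem_dropUntil [DecidableEq V] {G : SimpleGraph V} {a b w : V}
    {p : G.Walk a b} (hp : p.IsPath) (hw : w ∈ p.support) (hwa : w ≠ a) :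
    a ∉ (p.dropUntil w hw).support := by
  intro ha
  have hspec := p.take_spec hw
  have hnd : ((p.takeUntil w hw).append (p.dropUntil w hw)).support.Nodup := by
    rw [hspec]; exact hp.support_nodup
  rw [support_append, List.nodup_append] at hnd
  have ha2 : a ∈ (p.dropUntil w hw).support.tail := by
    have := ha
    rw [(p.dropUntil w hw).support_eq_cons] at this
    rcases List.mem_cons.1 this with h1 | h2
    · exact absurd h1.symm hwa
    · exact h2
  exact hnd.2.2 _ (p.takeUntil w hw).start_mem_support _ ha2 rfl

/-- Refine a family so that each path meets `B` only in its final vertex. -/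
lemma MFam.refineB {G : SimpleGraph V} {A B : Set V} {k : ℕ} (h : MFam G A B k) :
    ∃ (f g : Fin k → V) (P : ∀ i, G.Walk (f i) (g i)),
      (∀ i, f i ∈ A) ∧ (∀ i, g i ∈ B) ∧ (∀ i, (P i).IsPath) ∧
      (∀ i j, i ≠ j → ∀ w, w ∈ (P i).support → w ∉ (P j).support) ∧
      (∀ i, ∀ z ∈ (P i).support, z ∈ B → z = g i) := by
  obtain ⟨f, g, P, hf, hg, hp, hd⟩ := h
  have hex : ∀ i, ∃ (w : V) (q : G.Walk (f i) w), w ∈ B ∧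
      (∀ z ∈ q.support, z ∈ (P i).support) ∧ (∀ z ∈ q.support, z ∈ B → z = w) ∧
      (∀ e ∈ q.edges, e ∈ (P i).edges) :=
    fun i => exists_prefix B (P i) ⟨g i, hg i, (P i).end_mem_support⟩
  choose w q hw hsub hmeet hedge using hex
  refine ⟨f, w, fun i => ((q i).toPath : G.Path _ _).1, hf, hw,
    fun i => ((q i).toPath).2, ?_, ?_⟩
  · intro i j hij z hzi hzj
    exact hd i j hij z (hsub i z ((q i).support_toPath_subset hzi))
      (hsub j z ((q j).support_toPath_subset hzj))
  · intro i z hz hzB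
    exact hmeet i z ((q i).support_toPath_subset hz) hzB

/-- Refine a family so that each path meets `A` only in its first vertex. -/
lemma MFam.refineA {G : SimpleGraph V} {A B : Set V} {k : ℕ} (h : MFam G A B k) :
    ∃ (f g : Fin k → V) (P : ∀ i, G.Walk (f i) (g i)),
      (∀ i, f i ∈ A) ∧ (∀ i, g i ∈ B) ∧ (∀ i, (P i).IsPath) ∧
      (∀ i j, i ≠ j → ∀ w, w ∈ (P i).support → w ∉ (P j).support) ∧
      (∀ i, ∀ z ∈ (P i).support, z ∈ A → z = f i) := by
  obtain ⟨f, g, P, hf, hg, hp, hd, hmeet⟩ := h.rev.refineB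
  refine ⟨g, f, fun i => (P i).reverse, hg, hf, fun i => (hp i).reverse, ?_, ?_⟩
  · intro i j hij z hzi hzj
    rw [Walk.support_reverse, List.mem_reverse] at hzi hzj
    exact hd i j hij z hzi hzj
  · intro i z hz hzA
    rw [Walk.support_reverse, List.mem_reverse] at hz
    exact hmeet i z hz hzA

end MengerMachinery

section Contraction

variable {V : Type}

attribute [local instance] Classical.decEq

/-- The projection map contracting `v` onto `u`. -/
noncomputable def cproj (u v : V) : V → V := fun w => if w = v then u else w

/-- The contraction of the edge `uv`: `v` becomes isolated, its neighbors move to `u`. -/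
def CG (G : SimpleGraph V) (u v : V) : SimpleGraph V :=
  SimpleGraph.fromRel fun a b => ∃ a' b', G.Adj a' b' ∧ cproj u v a' = a ∧ cproj u v b' = b

lemma cproj_ne_v {u v : V} (huv : u ≠ v) (w : V) : cproj u v w ≠ v := by
  unfold cproj
  split
  · exact huv
  · assumption

lemma cproj_eq_self {u v w : V} (hw : w ≠ v) : cproj u v w = w := if_neg hw

lemma cproj_v {u v : V} : cproj u v v = u := if_pos rfl

lemma cproj_preimage {u v w z : V} (h : cproj u v w = z) (hz : z ≠ u) : w = z := by
  unfold cproj at h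
  split at h
  · exact absurd h.symm hz
  · exact h

lemma CG_adj_ne_v {G : SimpleGraph V} {u v a b : V} (huv : u ≠ v)
    (h : (CG G u v).Adj a b) : a ≠ v ∧ b ≠ v := by
  rw [CG, fromRel_adj] at h
  rcases h.2 with ⟨a', b', _, ha, hb⟩ | ⟨a', b', _, ha, hb⟩
  · exact ⟨ha ▸ cproj_ne_v huv a', hb ▸ cproj_ne_v huv b'⟩
  · exact ⟨hb ▸ cproj_ne_v huv b', ha ▸ cproj_ne_v huv a'⟩

lemma CG_adj_of_adj {G : SimpleGraph V} {u v a b : V} (h : G.Adj a b)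
    (hne : cproj u v a ≠ cproj u v b) : (CG G u v).Adj (cproj u v a) (cproj u v b) := by
  rw [CG, fromRel_adj]
  exact ⟨hne, Or.inl ⟨a, b, h, rfl, rfl⟩⟩

lemma CG_adj_real {G : SimpleGraph V} {u v a b : V}
    (h : (CG G u v).Adj a b) (hau : a ≠ u) (hbu : b ≠ u) : G.Adj a b := by
  rw [CG, fromRel_adj] at h
  rcases h.2 with ⟨a', b', hG, ha, hb⟩ | ⟨a', b', hG, ha, hb⟩
  · rwa [cproj_preimage ha hau, cproj_preimage hb hbu] at hG
  · exact (by rwa [cproj_preimage ha hbu, cproj_preimage hb hau] at hG : G.Adj b a).symm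

lemma CG_adj_u {G : SimpleGraph V} {u v b : V}
    (h : (CG G u v).Adj u b) (hbu : b ≠ u) : ∃ s, (s = u ∨ s = v) ∧ G.Adj s b := by
  rw [CG, fromRel_adj] at h
  rcases h.2 with ⟨a', b', hG, ha, hb⟩ | ⟨a', b', hG, ha, hb⟩
  · have hb' : b' = b := cproj_preimage hb hbu
    subst hb'
    have : a' = u ∨ a' = v := by
      by_cases hav : a' = v
      · exact Or.inr hav
      · exact Or.inl (by rwa [cproj_eq_self hav] at ha)
    exact ⟨a', this, hG⟩
  · have ha' : a' = b := cproj_preimage ha hbu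
    subst ha'
    have : b' = u ∨ b' = v := by
      by_cases hbv : b' = v
      · exact Or.inr hbv
      · exact Or.inl (by rwa [cproj_eq_self hbv] at hb)
    exact ⟨b', this, hG.symm⟩

lemma CG_not_v_mem_support {G : SimpleGraph V} {u v : V} (huv : u ≠ v) :
    ∀ {a b : V} (q : (CG G u v).Walk a b), a ≠ v → v ∉ q.support := by
  intro a b q
  induction q with
  | nil => intro ha; simp [ha.symm]
  | @cons a c b h q ih =>
    intro ha
    rw [support_cons, List.mem_cons]
    rintro (rfl | hv)
    · exact ha rfl
    · exact ih (CG_adj_ne_v huv h).2 hv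

lemma CG_edgeSet_lt {G : SimpleGraph V} [Fintype V] {u v : V} (huv : G.Adj u v) :
    (CG G u v).edgeSet.ncard < G.edgeSet.ncard := by
  classical
  set ψ : Sym2 V → Sym2 V := Sym2.map (cproj u v) with hψ
  have h1 : (CG G u v).edgeSet ⊆ (ψ '' G.edgeSet) \ {s(u, u)} := by
    intro e he
    induction e with
    | h x y =>
      rw [SimpleGraph.mem_edgeSet] at he
      have hxy := he.ne
      have : ∃ a' b', G.Adj a' b' ∧ cproj u v a' = x ∧ cproj u v b' = y := by
        rw [CG, fromRel_adj] at he
        rcases he.2 with ⟨a', b', hG, ha, hb⟩ | ⟨a', b', hG, ha, hb⟩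
        · exact ⟨a', b', hG, ha, hb⟩
        · exact ⟨b', a', hG.symm, hb, ha⟩
      obtain ⟨a', b', hG, ha, hb⟩ := this
      constructor
      · exact ⟨s(a', b'), hG, by simp [hψ, Sym2.map_pair_eq, ha, hb]⟩
      · simp only [Set.mem_singleton_iff, Sym2.eq, Sym2.rel_iff', Prod.mk.injEq, Prod.swap_prod_mk]
        rintro (⟨rfl, rfl⟩ | ⟨rfl, rfl⟩) <;> exact hxy rfl
  have h2 : s(u, u) ∈ ψ '' G.edgeSet := by
    refine ⟨s(u, v), huv, ?_⟩
    simp [hψ, Sym2.map_pair_eq, cproj_v, cproj_eq_self huv.ne]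
  calc (CG G u v).edgeSet.ncard ≤ ((ψ '' G.edgeSet) \ {s(u, u)}).ncard :=
        Set.ncard_le_ncard h1 ((G.edgeSet.toFinite.image ψ).diff)
    _ < (ψ '' G.edgeSet).ncard := by
        apply Set.ncard_lt_ncard _ (G.edgeSet.toFinite.image ψ)
        exact Set.sdiff_singleton_ssubset.mpr h2
    _ ≤ G.edgeSet.ncard := Set.ncard_image_le G.edgeSet.toFinite

/-- Projection of a walk to the contracted graph. -/
lemma exists_proj_walk {G : SimpleGraph V} {u v : V} :
    ∀ {a b : V} (p : G.Walk a b),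
      ∃ q : (CG G u v).Walk (cproj u v a) (cproj u v b),
        ∀ s ∈ q.support, ∃ w ∈ p.support, cproj u v w = s := by
  intro a b p
  induction p with
  | nil => exact ⟨Walk.nil, by simp⟩
  | @cons a c b h p ih =>
    obtain ⟨q, hq⟩ := ih
    by_cases hc : cproj u v a = cproj u v c
    · refine ⟨q.copy hc.symm rfl, ?_⟩
      intro s hs
      rw [Walk.support_copy] at hs
      obtain ⟨w, hw, hws⟩ := hq s hs
      exact ⟨w, by simp [hw], hws⟩
    · refine ⟨Walk.cons (CG_adj_of_adj h hc) q, ?_⟩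
      intro s hs
      rw [support_cons, List.mem_cons] at hs
      rcases hs with rfl | hs
      · exact ⟨a, by simp, rfl⟩
      · obtain ⟨w, hw, hws⟩ := hq s hs
        exact ⟨w, by simp [hw], hws⟩

/-- Transfer a walk avoiding `u` and `v` from the contraction back to `G`. -/
lemma CG_transfer_clean {G : SimpleGraph V} {u v : V} :
    ∀ {a b : V} (q : (CG G u v).Walk a b), (∀ w ∈ q.support, w ≠ u ∧ w ≠ v) →
      ∃ p : G.Walk a b, p.support = q.support := by
  intro a b q
  induction q with
  | nil => exact fun _ => ⟨Walk.nil, rfl⟩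
  | @cons a c b h q ih =>
    intro hcl
    have hadj : G.Adj a c :=
      CG_adj_real h (hcl a (by simp)).1 (hcl c (by simp)).1
    obtain ⟨p, hp⟩ := ih (fun w hw => hcl w (by simp [hw]))
    exact ⟨Walk.cons hadj p, by simp [hp]⟩

end Contraction

section Lifting

variable {V : Type}

attribute [local instance] Classical.decEq

lemma lift_ray {G : SimpleGraph V} {u v : V} (huv : G.Adj u v) {d : V}
    (q : (CG G u v).Walk u d) (hqt : u ∉ q.support.tail) (hd : d ≠ u)
    (s : V) (hs : s = u ∨ s = v) :
    ∃ p : G.Walk s d, ∀ w ∈ p.support, w ∈ q.support ∨ w = u ∨ w = v := by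
  cases q with
  | nil => exact absurd rfl hd
  | @cons a c b h q' =>
    have hct : c ∈ (Walk.cons h q').support.tail := by
      simp [q'.start_mem_support]
    have hcu : c ≠ u := fun h' => hqt (h' ▸ hct)
    have hcv : c ≠ v := (CG_adj_ne_v huv.ne h).2
    have htail : (Walk.cons h q').support.tail = q'.support := by simp
    have hclean : ∀ w ∈ q'.support, w ≠ u ∧ w ≠ v := by
      intro w hw
      refine ⟨fun h' => hqt (htail ▸ (h' ▸ hw : u ∈ q'.support)), fun h' => ?_⟩
      exact CG_not_v_mem_support huv.ne q' hcv (h' ▸ hw)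
    obtain ⟨p', hp'⟩ := CG_transfer_clean q' hclean
    obtain ⟨s₀, hs₀, hadj⟩ := CG_adj_u h hcu
    by_cases hsc : G.Adj s c
    · refine ⟨Walk.cons hsc p', ?_⟩
      intro w hw
      rw [Walk.support_cons, List.mem_cons] at hw
      rcases hw with rfl | hw
      · exact Or.inr hs
      · rw [hp'] at hw
        exact Or.inl (by simp [hw])
    · have hss0 : s ≠ s₀ := by rintro rfl; exact hsc hadj
      have hadj2 : G.Adj s s₀ := by
        rcases hs with rfl | rfl <;> rcases hs₀ with rfl | rfl
        · exact absurd rfl hss0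
        · exact huv
        · exact huv.symm
        · exact absurd rfl hss0
      refine ⟨Walk.cons hadj2 (Walk.cons hadj p'), ?_⟩
      intro w hw
      rw [Walk.support_cons, List.mem_cons] at hw
      rcases hw with rfl | hw
      · exact Or.inr hs
      rw [Walk.support_cons, List.mem_cons] at hw
      rcases hw with rfl | hw
      · exact Or.inr hs₀
      · rw [hp'] at hw
        exact Or.inl (by simp [hw])

lemma lift_walk {G : SimpleGraph V} {u v : V} (huv : G.Adj u v) {a' b' sa sb : V}
    (q : (CG G u v).Walk a' b') (hq : q.IsPath) (hav : a' ≠ v) (hbv : b' ≠ v)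
    (hsa : sa = a' ∨ (a' = u ∧ (sa = u ∨ sa = v)))
    (hsb : sb = b' ∨ (b' = u ∧ (sb = u ∨ sb = v))) :
    ∃ p : G.Walk sa sb, ∀ w ∈ p.support,
      w ∈ q.support ∨ ((w = u ∨ w = v) ∧ u ∈ q.support) := by
  have hvq : v ∉ q.support := CG_not_v_mem_support huv.ne q hav
  by_cases hu : u ∈ q.support
  · -- u on the walk: build left and right halves meeting at u
    have hleft : ∃ pL : G.Walk sa u, ∀ w ∈ pL.support, w ∈ q.support ∨ w = u ∨ w = v := by
      by_cases hau : a' = u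
      · subst hau
        have hsau : sa = a' ∨ sa = v := by
          rcases hsa with h | ⟨_, h | h⟩
          · exact Or.inl h
          · exact Or.inl h
          · exact Or.inr h
        rcases hsau with rfl | rfl
        · exact ⟨Walk.nil, by simp⟩
        · refine ⟨Walk.cons huv.symm Walk.nil, ?_⟩
          intro w hw
          right
          simpa [or_comm] using hw
      · have hsa' : sa = a' := by
          rcases hsa with h | ⟨h, _⟩
          · exact h
          · exact absurd h hau
        subst hsa'
        have r := (q.takeUntil u hu).reverse
        have hrp : (q.takeUntil u hu).reverse.IsPath := (hq.takeUntil hu).reverse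
        obtain ⟨p₁, hp₁⟩ := lift_ray huv (q.takeUntil u hu).reverse
          (path_start_not_mem_tail hrp) hau u (Or.inl rfl)
        refine ⟨p₁.reverse, ?_⟩
        intro w hw
        rw [Walk.support_reverse, List.mem_reverse] at hw
        rcases hp₁ w hw with h | h
        · rw [Walk.support_reverse, List.mem_reverse] at h
          exact Or.inl (q.support_takeUntil_subset hu h)
        · exact Or.inr h
    have hright : ∃ pR : G.Walk u sb, ∀ w ∈ pR.support, w ∈ q.support ∨ w = u ∨ w = v := by
      by_cases hbu : b' = u
      · subst hbu
        have hsbu : sb = b' ∨ sb = v := by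
          rcases hsb with h | ⟨_, h | h⟩
          · exact Or.inl h
          · exact Or.inl h
          · exact Or.inr h
        rcases hsbu with rfl | rfl
        · exact ⟨Walk.nil, by simp⟩
        · refine ⟨Walk.cons huv Walk.nil, ?_⟩
          intro w hw
          right
          simpa [or_comm] using hw
      · have hsb' : sb = b' := by
          rcases hsb with h | ⟨h, _⟩
          · exact h
          · exact absurd h hbu
        subst hsb'
        have hdp : (q.dropUntil u hu).IsPath := hq.dropUntil hu
        obtain ⟨p₂, hp₂⟩ := lift_ray huv (q.dropUntil u hu)
          (path_start_not_mem_tail hdp) hbu u (Or.inl rfl)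
        refine ⟨p₂, ?_⟩
        intro w hw
        rcases hp₂ w hw with h | h
        · exact Or.inl (q.support_dropUntil_subset hu h)
        · exact Or.inr h
    obtain ⟨pL, hL⟩ := hleft
    obtain ⟨pR, hR⟩ := hright
    refine ⟨pL.append pR, ?_⟩
    intro w hw
    rw [Walk.mem_support_append_iff] at hw
    rcases hw with hw | hw
    · rcases hL w hw with h | h
      · exact Or.inl h
      · exact Or.inr ⟨h, hu⟩
    · rcases hR w hw with h | h
      · exact Or.inl h
      · exact Or.inr ⟨h, hu⟩
  · -- u not on the walk: direct transfer
    have hau : a' ≠ u := fun h => hu (h ▸ q.start_mem_support)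
    have hbu : b' ≠ u := fun h => hu (h ▸ q.end_mem_support)
    have hsa' : sa = a' := by
      rcases hsa with h | ⟨h, _⟩
      · exact h
      · exact absurd h hau
    have hsb' : sb = b' := by
      rcases hsb with h | ⟨h, _⟩
      · exact h
      · exact absurd h hbu
    subst hsa'; subst hsb'
    obtain ⟨p, hp⟩ := CG_transfer_clean q
      (fun w hw => ⟨fun h' => hu (h' ▸ hw), fun h' => hvq (h' ▸ hw)⟩)
    exact ⟨p, fun w hw => Or.inl (hp ▸ hw)⟩

end Lifting

section MengerMain

variable {V : Type}

attribute [local instance] Classical.decEq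

lemma menger_no_edges [Fintype V] {G : SimpleGraph V} (hE : G.edgeSet = ∅)
    (A B : Set V) (k : ℕ) (hsep : ∀ S : Set V, MSep G A B S → k ≤ S.ncard) :
    MFam G A B k := by
  have hAB : MSep G A B (A ∩ B) := by
    intro a b ha hb p
    cases p with
    | nil => exact ⟨a, ⟨ha, hb⟩, by simp⟩
    | cons h _ =>
      have : s(_, _) ∈ G.edgeSet := h
      rw [hE] at this
      exact absurd this (Set.notMem_empty _)
  have hk := hsep _ hAB
  have hfin : (A ∩ B).Finite := Set.toFinite _
  rw [Set.ncard_eq_toFinset_card _ hfin] at hk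
  obtain ⟨t, hts, htc⟩ := Finset.exists_subset_card_eq hk
  let f : Fin k → V := fun i => (t.equivFin.symm (Fin.cast htc.symm i)).1
  have hfmem : ∀ i, f i ∈ A ∩ B := by
    intro i
    have := (t.equivFin.symm (Fin.cast htc.symm i)).2
    have := hts this
    rwa [Set.Finite.mem_toFinset] at this
  have hfinj : Function.Injective f := by
    intro i j hij
    have : t.equivFin.symm (Fin.cast htc.symm i) = t.equivFin.symm (Fin.cast htc.symm j) :=
      Subtype.ext hij
    have := t.equivFin.symm.injective this
    exact Fin.cast_injective _ this
  refine ⟨f, f, fun i => Walk.nil, fun i => (hfmem i).1, fun i => (hfmem i).2,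
    fun i => Walk.IsPath.nil, ?_⟩
  intro i j hij w hwi hwj
  simp only [Walk.support_nil, List.mem_singleton] at hwi hwj
  exact hij (hfinj (hwi ▸ hwj : f i = f j))

theorem mengerAux [Fintype V] : ∀ (n : ℕ) (G : SimpleGraph V) (A B : Set V) (k : ℕ),
    G.edgeSet.ncard ≤ n →
    (∀ S : Set V, MSep G A B S → k ≤ S.ncard) → MFam G A B k := by
  intro n
  induction n with
  | zero =>
    intro G A B k hG hsep
    exact menger_no_edges ((Set.ncard_eq_zero (Set.toFinite _)).1 (Nat.le_zero.1 hG)) A B k hsep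
  | succ n ih =>
    intro G A B k hG hsep
    by_cases hE : G.edgeSet = ∅
    · exact menger_no_edges hE A B k hsep
    · obtain ⟨e₀, he₀⟩ := Set.nonempty_iff_ne_empty.2 hE
      induction e₀ using Sym2.ind with
      | _ u v =>
      have huv : G.Adj u v := G.mem_edgeSet.1 he₀
      set A' : Set V := {w | w ≠ v ∧ (w ∈ A ∨ (w = u ∧ v ∈ A))} with hA'
      set B' : Set V := {w | w ≠ v ∧ (w ∈ B ∨ (w = u ∧ v ∈ B))} with hB'
      by_cases hHsep : ∀ S : Set V, MSep (CG G u v) A' B' S → k ≤ S.ncard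
      · -- contraction has no small separator : lift a family from the contraction
        have hHcard : (CG G u v).edgeSet.ncard ≤ n := by
          have h1 := CG_edgeSet_lt huv
          omega
        obtain ⟨f', g', Q, hf', hg', hQp, hQd⟩ := ih (CG G u v) A' B' k hHcard hHsep
        have hsaex : ∀ i, ∃ sa, sa ∈ A ∧ (sa = f' i ∨ (f' i = u ∧ (sa = u ∨ sa = v))) := by
          intro i
          obtain ⟨hne, h | ⟨hu', hv'⟩⟩ := hf' i
          · exact ⟨f' i, h, Or.inl rfl⟩
          · exact ⟨v, hv', Or.inr ⟨hu', Or.inr rfl⟩⟩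
        have hsbex : ∀ i, ∃ sb, sb ∈ B ∧ (sb = g' i ∨ (g' i = u ∧ (sb = u ∨ sb = v))) := by
          intro i
          obtain ⟨hne, h | ⟨hu', hv'⟩⟩ := hg' i
          · exact ⟨g' i, h, Or.inl rfl⟩
          · exact ⟨v, hv', Or.inr ⟨hu', Or.inr rfl⟩⟩
        choose sa hsaA hsaP using hsaex
        choose sb hsbB hsbP using hsbex
        have hlift : ∀ i, ∃ p : G.Walk (sa i) (sb i), ∀ w ∈ p.support,
            w ∈ (Q i).support ∨ ((w = u ∨ w = v) ∧ u ∈ (Q i).support) :=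
          fun i => lift_walk huv (Q i) (hQp i) (hf' i).1 (hg' i).1 (hsaP i) (hsbP i)
        choose p hp using hlift
        apply MFam.ofWalks sa sb p hsaA hsbB
        intro i j hij w hwi hwj
        have hvni : ∀ m : Fin k, v ∉ (Q m).support := fun m =>
          CG_not_v_mem_support huv.ne (Q m) (hf' m).1
        rcases hp i w hwi with h1 | ⟨h1, hui⟩ <;> rcases hp j w hwj with h2 | ⟨h2, huj⟩
        · exact hQd i j hij w h1 h2
        · rcases h2 with rfl | rfl
          · exact hQd i j hij w h1 huj
          · exact hvni i h1
        · rcases h1 with rfl | rfl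
          · exact hQd i j hij w hui h2
          · exact hvni j h2
        · exact hQd i j hij u hui huj
      · -- there is a small separator in the contraction: build a size-k separator Z ∋ u,v
        push_neg at hHsep
        obtain ⟨Y, hYsep, hYlt⟩ := hHsep
        have hmemA' : ∀ a ∈ A, cproj u v a ∈ A' := by
          intro a ha
          by_cases hav : a = v
          · subst hav
            exact ⟨cproj_ne_v huv.ne _, Or.inr ⟨cproj_v, ha⟩⟩
          · rw [cproj_eq_self hav]
            exact ⟨hav, Or.inl ha⟩
        have hmemB' : ∀ b ∈ B, cproj u v b ∈ B' := by
          intro b hb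
          by_cases hbv : b = v
          · subst hbv
            exact ⟨cproj_ne_v huv.ne _, Or.inr ⟨cproj_v, hb⟩⟩
          · rw [cproj_eq_self hbv]
            exact ⟨hbv, Or.inl hb⟩
        have hproj : ∀ a b, a ∈ A → b ∈ B → ∀ pw : G.Walk a b,
            ∃ s ∈ Y, ∃ w ∈ pw.support, cproj u v w = s := by
          intro a b ha hb pw
          obtain ⟨qw, hqw⟩ := exists_proj_walk (u := u) (v := v) pw
          obtain ⟨s, hsY, hs⟩ := hYsep (hmemA' a ha) (hmemB' b hb) qw
          obtain ⟨w, hw, hws⟩ := hqw s hs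
          exact ⟨s, hsY, w, hw, hws⟩
        have huY : u ∈ Y := by
          by_contra huY
          have hYG : MSep G A B Y := by
            intro a b ha hb pw
            obtain ⟨s, hsY, w, hw, hws⟩ := hproj a b ha hb pw
            have hws' : w = s := cproj_preimage hws (fun h => huY (h ▸ hsY))
            exact ⟨s, hsY, hws' ▸ hw⟩
          have := hsep Y hYG
          omega
        have hZsep : MSep G A B (Y ∪ {v}) := by
          intro a b ha hb pw
          obtain ⟨s, hsY, w, hw, hws⟩ := hproj a b ha hb pw
          by_cases hsu : s = u
          · subst hsu
            by_cases hwv : w = v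
            · exact ⟨v, Or.inr rfl, hwv ▸ hw⟩
            · rw [cproj_eq_self hwv] at hws
              exact ⟨s, Or.inl (hws ▸ hsY), hws ▸ hw⟩
          · have hws' : w = s := cproj_preimage hws hsu
            exact ⟨s, Or.inl hsY, hws' ▸ hw⟩
        have hZcard : (Y ∪ {v}).ncard = k := by
          have h1 : k ≤ (Y ∪ {v}).ncard := hsep _ hZsep
          have h2 : (Y ∪ {v}).ncard ≤ Y.ncard + 1 := by
            have h3 := Set.ncard_union_le Y ({v} : Set V)
            simpa using h3
          omega
        have huZ : u ∈ Y ∪ {v} := Or.inl huY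
        have hvZ : v ∈ Y ∪ {v} := Or.inr rfl
        have hGecard : (G.deleteEdges {s(u, v)}).edgeSet.ncard ≤ n := by
          have hlt : (G.deleteEdges {s(u, v)}).edgeSet.ncard < G.edgeSet.ncard := by
            apply Set.ncard_lt_ncard _ (Set.toFinite _)
            rw [edgeSet_deleteEdges]
            constructor
            · exact Set.diff_subset
            · intro hsub
              exact (hsub he₀).2 rfl
          omega
        have hAZ : ∀ R : Set V, MSep (G.deleteEdges {s(u, v)}) A (Y ∪ {v}) R →
            k ≤ R.ncard := by
          intro R hR
          apply hsep
          intro a b ha hb pw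
          obtain ⟨w, qw, hwZ, hsub, hmeet1, hedge⟩ :=
            exists_prefix (Y ∪ {v}) pw (hZsep ha hb pw)
          have hqe : ∀ e' ∈ qw.edges, e' ∈ (G.deleteEdges {s(u, v)}).edgeSet := by
            intro e' he'
            rw [edgeSet_deleteEdges]
            refine ⟨qw.edges_subset_edgeSet he', ?_⟩
            simp only [Set.mem_singleton_iff]
            rintro rfl
            have h1 := qw.fst_mem_support_of_mem_edges he'
            have h2 := qw.snd_mem_support_of_mem_edges he'
            exact huv.ne ((hmeet1 u h1 huZ).trans (hmeet1 v h2 hvZ).symm)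
          obtain ⟨s, hsR, hss⟩ := hR ha hwZ (qw.transfer _ hqe)
          rw [Walk.support_transfer] at hss
          exact ⟨s, hsR, hsub s hss⟩
        have hZB : ∀ R : Set V, MSep (G.deleteEdges {s(u, v)}) (Y ∪ {v}) B R →
            k ≤ R.ncard := by
          intro R hR
          apply hsep
          intro a b ha hb pw
          have hmeets : ∃ s ∈ Y ∪ {v}, s ∈ pw.reverse.support := by
            obtain ⟨s, h1, h2⟩ := hZsep ha hb pw
            exact ⟨s, h1, by rwa [Walk.support_reverse, List.mem_reverse]⟩
          obtain ⟨w, qw, hwZ, hsub, hmeet1, hedge⟩ :=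
            exists_prefix (Y ∪ {v}) pw.reverse hmeets
          have hqe : ∀ e' ∈ qw.edges, e' ∈ (G.deleteEdges {s(u, v)}).edgeSet := by
            intro e' he'
            rw [edgeSet_deleteEdges]
            refine ⟨qw.edges_subset_edgeSet he', ?_⟩
            simp only [Set.mem_singleton_iff]
            rintro rfl
            have h1 := qw.fst_mem_support_of_mem_edges he'
            have h2 := qw.snd_mem_support_of_mem_edges he'
            exact huv.ne ((hmeet1 u h1 huZ).trans (hmeet1 v h2 hvZ).symm)
          obtain ⟨s, hsR, hss⟩ := hR hwZ hb ((qw.transfer _ hqe).reverse)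
          rw [Walk.support_reverse, List.mem_reverse, Walk.support_transfer] at hss
          have hs2 := hsub s hss
          rw [Walk.support_reverse, List.mem_reverse] at hs2
          exact ⟨s, hsR, hs2⟩
        have famA : MFam G A (Y ∪ {v}) k :=
          (ih (G.deleteEdges {s(u, v)}) A (Y ∪ {v}) k hGecard hAZ).le (deleteEdges_le _)
        have famB : MFam G (Y ∪ {v}) B k :=
          (ih (G.deleteEdges {s(u, v)}) (Y ∪ {v}) B k hGecard hZB).le (deleteEdges_le _)
        obtain ⟨fP, gP, P, hfP, hgP, hPp, hPd, hPmeet⟩ := famA.refineB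
        obtain ⟨fQ, gQ, Q, hfQ, hgQ, hQp, hQd, hQmeet⟩ := famB.refineA
        have hgPinj : Function.Injective gP := by
          intro i j hgij
          by_contra hij'
          refine hPd i j hij' (gP i) ((P i).end_mem_support) ?_
          rw [hgij]
          exact (P j).end_mem_support
        have hfQinj : Function.Injective fQ := by
          intro i j hgij
          by_contra hij'
          refine hQd i j hij' (fQ i) ((Q i).start_mem_support) ?_
          rw [hgij]
          exact (Q j).start_mem_support
        haveI : Fintype ↥(Y ∪ {v}) := (Set.toFinite _).fintype
        have hcard : Fintype.card ↥(Y ∪ {v}) = k := by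
          calc Fintype.card ↥(Y ∪ {v}) = Nat.card ↥(Y ∪ {v}) :=
                (Nat.card_eq_fintype_card).symm
            _ = (Y ∪ {v}).ncard := Nat.card_coe_set_eq _
            _ = k := hZcard
        have hbij : Function.Bijective (fun j => (⟨fQ j, hfQ j⟩ : ↥(Y ∪ {v}))) := by
          rw [Fintype.bijective_iff_injective_and_card]
          refine ⟨fun i j h => hfQinj (congrArg Subtype.val h), by simp [hcard]⟩
        set eQ : Fin k ≃ ↥(Y ∪ {v}) := Equiv.ofBijective _ hbij with heQ
        set σ : Fin k → Fin k := fun i => eQ.symm ⟨gP i, hgP i⟩ with hσdef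
        have hσ : ∀ i, fQ (σ i) = gP i := by
          intro i
          have h1 := eQ.apply_symm_apply ⟨gP i, hgP i⟩
          have h2 := congrArg Subtype.val h1
          exact h2
        have hσinj : Function.Injective σ := by
          intro i j h
          exact hgPinj (by rw [← hσ i, ← hσ j, h])
        have hcross : ∀ i j w, w ∈ (P i).support → w ∈ (Q j).support →
            w = gP i ∧ w = fQ j := by
          intro i j w hwP hwQ
          by_cases hwZ : w ∈ Y ∪ {v}
          · exact ⟨hPmeet i w hwP hwZ, hQmeet j w hwQ hwZ⟩
          · exfalso
            obtain ⟨s, hsZ, hss⟩ := hZsep (hfP i) (hgQ j)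
              (((P i).takeUntil w hwP).append ((Q j).dropUntil w hwQ))
            rw [Walk.mem_support_append_iff] at hss
            rcases hss with hss | hss
            · have h1 : s = gP i :=
                hPmeet i s ((P i).support_takeUntil_subset hwP hss) hsZ
              subst h1
              exact endpoint_not_mem_takeUntil (hPp i) hwP
                (fun h => hwZ (h ▸ hgP i)) hss
            · have h1 : s = fQ j :=
                hQmeet j s ((Q j).support_dropUntil_subset hwQ hss) hsZ
              subst h1
              exact start_not_mem_dropUntil (hQp j) hwQ
                (fun h => hwZ (h ▸ hfQ j)) hss
        apply MFam.ofWalks fP (fun i => gQ (σ i))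
          (fun i => (P i).append ((Q (σ i)).copy (hσ i) rfl)) hfP (fun i => hgQ (σ i))
        intro i j hij w hwi hwj
        rw [Walk.mem_support_append_iff, Walk.support_copy] at hwi hwj
        rcases hwi with h1 | h1 <;> rcases hwj with h2 | h2
        · exact hPd i j hij w h1 h2
        · obtain ⟨hA1, hB1⟩ := hcross i (σ j) w h1 h2
          exact hij (hgPinj (hA1.symm.trans (hB1.trans (hσ j))))
        · obtain ⟨hA1, hB1⟩ := hcross j (σ i) w h2 h1
          exact hij (hgPinj (hA1.symm.trans (hB1.trans (hσ i))).symm)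
        · exact hQd (σ i) (σ j) (fun h => hij (hσinj h)) w h1 h2

end MengerMain

section FanProof

variable {V : Type}

attribute [local instance] Classical.decEq

section FanProof

variable {V : Type}

attribute [local instance] Classical.decEq

lemma kconn_degree [Fintype V] {G : SimpleGraph V} {k : ℕ} (hk : KConnected k G) (x : V) :
    k ≤ (G.neighborSet x).ncard := by
  by_contra h
  push_neg at h
  have hconn := hk.2 (G.neighborSet x) h
  have hx : x ∈ (G.neighborSet x)ᶜ := by simp
  have hne : (G.neighborSet x ∪ {x}) ≠ Set.univ := by
    intro hEq
    have h1 := Set.ncard_union_le (G.neighborSet x) ({x} : Set V)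
    rw [hEq, Set.ncard_univ, Nat.card_eq_fintype_card, Set.ncard_singleton] at h1
    have h2 := hk.1
    omega
  obtain ⟨y, hy⟩ := Set.ne_univ_iff_exists_notMem _ |>.1 hne
  have hy1 : y ∈ (G.neighborSet x)ᶜ := fun hmem => hy (Or.inl hmem)
  have hxy : x ≠ y := by
    rintro rfl
    exact hy (Or.inr rfl)
  have hreach := hconn.preconnected ⟨x, hx⟩ ⟨y, hy1⟩
  obtain ⟨q⟩ := hreach
  cases q with
  | nil => exact hxy rfl
  | @cons _ c _ hadj q' =>
    have hc : G.Adj x c.1 := hadj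
    exact c.2 hc


end FanProof

/-- Fan Lemma: if `G` is `k`-connected, `x` a vertex, and `U ⊆ V(G) \ {x}` has size at least
`k`, then there is an `x,U`-fan of size `k`: `k` paths from `x` to distinct vertices of `U`,
pairwise disjoint except at `x`, each meeting `U` only in its endpoint. -/
theorem fan_lemma {V : Type} [Fintype V] (G : SimpleGraph V) (k : ℕ)
    (hk : KConnected k G) (x : V) (U : Set V) (hxU : x ∉ U) (hU : k ≤ U.ncard) :
    ∃ (u : Fin k → V) (P : ∀ i, G.Walk x (u i)),
      Function.Injective u ∧
      (∀ i, u i ∈ U) ∧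
      (∀ i, (P i).IsPath) ∧
      (∀ i, {v | v ∈ (P i).support} ∩ U = {u i}) ∧
      (∀ i j, i ≠ j → {v | v ∈ (P i).support} ∩ {v | v ∈ (P j).support} = {x}) := by
  classical
  have hdeg := kconn_degree hk x
  have hsep : ∀ S : Set V, MSep G (G.neighborSet x) U S → k ≤ S.ncard := by
    intro S hS
    by_contra hlt
    push_neg at hlt
    have hconn := hk.2 S hlt
    have hbU : ∃ b, b ∈ U ∧ b ∉ S := by
      by_contra hc
      push_neg at hc
      have hsub : U ⊆ S := hc
      have := Set.ncard_le_ncard hsub (Set.toFinite _)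
      omega
    obtain ⟨b, hbU', hbS⟩ := hbU
    have haA : ∃ a, a ∈ G.neighborSet x ∧ a ∉ S := by
      by_contra hc
      push_neg at hc
      have hsub : G.neighborSet x ⊆ S := hc
      have := Set.ncard_le_ncard hsub (Set.toFinite _)
      omega
    obtain ⟨a, haA', haS⟩ := haA
    have hreach := hconn.preconnected ⟨a, haS⟩ ⟨b, hbS⟩
    obtain ⟨q⟩ := hreach
    let p := q.map (SimpleGraph.Embedding.induce (Sᶜ : Set V)).toHom
    obtain ⟨s, hsS, hsup⟩ := hS haA' hbU' p
    replace hsup : s ∈ (q.map (SimpleGraph.Embedding.induce (Sᶜ : Set V)).toHom).support := hsup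
    rw [Walk.support_map, List.mem_map] at hsup
    obtain ⟨c, _, hcs⟩ := hsup
    exact c.2 (by rwa [← hcs] at hsS : (c : V) ∈ S)
  have fam : MFam G (G.neighborSet x) U k :=
    mengerAux G.edgeSet.ncard G (G.neighborSet x) U k le_rfl hsep
  obtain ⟨f, g, P, hf, hg, hPp, hPd, hPmeet⟩ := fam.refineB
  have hFex : ∀ i, ∃ F : G.Walk x (g i), F.IsPath ∧
      (∀ w ∈ F.support, w = x ∨ w ∈ (P i).support) := by
    intro i
    by_cases hxi : x ∈ (P i).support
    · refine ⟨(P i).dropUntil x hxi, (hPp i).dropUntil hxi, ?_⟩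
      intro w hw
      exact Or.inr ((P i).support_dropUntil_subset hxi hw)
    · have hfadj : G.Adj x (f i) := hf i
      refine ⟨Walk.cons hfadj (P i), (hPp i).cons hxi, ?_⟩
      intro w hw
      rw [Walk.support_cons, List.mem_cons] at hw
      exact hw
  choose F hFp hFsub using hFex
  have hginj : Function.Injective g := by
    intro i j hgij
    by_contra hij'
    refine hPd i j hij' (g i) ((P i).end_mem_support) ?_
    rw [hgij]
    exact (P j).end_mem_support
  refine ⟨g, F, hginj, hg, hFp, ?_, ?_⟩
  · intro i
    apply Set.eq_singleton_iff_unique_mem.2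
    refine ⟨⟨(F i).end_mem_support, hg i⟩, ?_⟩
    intro z hz
    rcases hFsub i z hz.1 with rfl | hzP
    · exact absurd hz.2 hxU
    · exact hPmeet i z hzP hz.2
  · intro i j hij
    apply Set.eq_singleton_iff_unique_mem.2
    refine ⟨⟨(F i).start_mem_support, (F j).start_mem_support⟩, ?_⟩
    intro z hz
    rcases hFsub i z hz.1 with rfl | h1
    · rfl
    rcases hFsub j z hz.2 with rfl | h2
    · rfl
    exact absurd h1 (fun h1' => hPd i j hij z h1' h2)
end FanProof
end
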